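/- arXiv:2302.10743 — 3 statements merged into one kernel-verified Lean document; each statement's English description precedes it below -/
import Mathlib

section
/- Let A, B, P, Q be real trigonometric polynomials with P(t) ≠ 0 for all t ∈ ℝ, Q not identically zero, and P and Q having no common irreducible factors in the ring of real trigonometric polynomials. Then Q(t) − P(t)x = 0 is an invariant curve of the Abel equation x' = A(t)x^3 + B(t)x^2 if and only if Q is a constant c ∈ ℝ, c ≠ 0, and there exists a real trigonometric polynomial R(t) such that A(t) = (P(t)/c)·R(t) and B(t) = −P'(t)/c − R(t). In this case the cofactor equals A(t)x² − (P'(t)/c)x. -/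
open Real Set
noncomputable section
def TrigPolyRing : Subalgebra ℝ (ℝ → ℝ) := Algebra.adjoin ℝ {Real.cos, Real.sin}

/-- The curve `Q(t) - P(t)x = 0` is an invariant curve of the Abel equation
`x' = A(t)x³ + B(t)x²`. -/
def IsInvariantCurve (A B Q P : ℝ → ℝ) : Prop :=
  ∃ K : ℝ → ℝ → ℝ, Continuous (Function.uncurry K) ∧
    ∀ t x : ℝ,
      (deriv Q t - deriv P t * x) + (A t * x ^ 3 + B t * x ^ 2) * (-(P t)) =
        K t x * (Q t - P t * x)

namespace TrigAux
open Complex Polynomial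

def E (t : ℝ) : ℂ := Complex.exp (t * Complex.I)

lemma E_ne_zero (t : ℝ) : E t ≠ 0 := Complex.exp_ne_zero _

lemma E_mul_E_neg (t : ℝ) : E t * E (-t) = 1 := by
  rw [E, E, ← Complex.exp_add]
  norm_num [Complex.exp_zero]

lemma E_inv (t : ℝ) : (E t)⁻¹ = E (-t) :=
  eq_inv_of_mul_eq_one_left (by rw [mul_comm, E_mul_E_neg]) |>.symm

lemma conj_E (t : ℝ) : (starRingEnd ℂ) (E t) = E (-t) := by
  rw [E, ← Complex.exp_conj]
  congr 1
  simp [Complex.conj_I]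

lemma hasDerivAt_E (t : ℝ) : HasDerivAt E (I * E t) t := by
  have h1 : HasDerivAt (fun t : ℝ => (t : ℂ) * I) I t := by
    simpa using (Complex.ofRealCLM.hasDerivAt (x := t)).mul_const I
  exact (by simpa [mul_comm (cexp _) I] using h1.cexp : HasDerivAt (fun x : ℝ => cexp (↑x * I)) (I * cexp (↑t * I)) t)

lemma hasDerivAt_eval_E (f : ℂ[X]) (t : ℝ) :
    HasDerivAt (fun s => f.eval (E s)) (f.derivative.eval (E t) * (I * E t)) t :=
  (f.hasDerivAt (E t)).comp t (hasDerivAt_E t)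

/-- `F` is represented by exponent `ℓ` and polynomial `f`. -/
def RepM (F : ℝ → ℝ) (ℓ : ℕ) (f : ℂ[X]) : Prop :=
  ∀ t : ℝ, (F t : ℂ) * E t ^ ℓ = f.eval (E t)

lemma poly_eq_of_circle {f g : ℂ[X]} (h : ∀ t : ℝ, f.eval (E t) = g.eval (E t)) : f = g := by
  have hroot : {x : ℂ | (f - g).IsRoot x}.Infinite := by
    have hsub : (fun t : ℝ => E t) '' (Set.Ioo 0 1) ⊆ {x : ℂ | (f - g).IsRoot x} := by
      rintro x ⟨t, _, rfl⟩
      simp [IsRoot, h t]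
    refine Set.Infinite.mono hsub ?_
    refine Set.Infinite.image ?_ (Set.Ioo_infinite (by norm_num))
    intro a ha b hb hab
    have : Complex.exp (a * I) = Complex.exp (b * I) := hab
    rw [Complex.exp_eq_exp_iff_exists_int] at this
    obtain ⟨n, hn⟩ := this
    have hn' : (a : ℂ) - b = n * (2 * π) := by
      have h2 : ((a : ℂ) - b) * I = ((n : ℂ) * (2 * π)) * I := by linear_combination hn
      exact mul_right_cancel₀ Complex.I_ne_zero h2
    have hr : a - b = (n : ℝ) * (2 * π) := by exact_mod_cast hn'
    rcases ha with ⟨ha0, ha1⟩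
    rcases hb with ⟨hb0, hb1⟩
    have hpi : (2:ℝ) ≤ 2 * π := by nlinarith [Real.pi_gt_three]
    have : |a - b| < 1 := by rw [abs_sub_lt_iff]; constructor <;> linarith
    have hn0 : n = 0 := by
      by_contra hn0
      have : (1:ℝ) ≤ |(n:ℝ)| := by exact_mod_cast Int.one_le_abs (by exact_mod_cast hn0)
      have : (2:ℝ) ≤ |a - b| := by
        rw [hr, abs_mul]
        calc (2:ℝ) = 1 * 2 := by ring
        _ ≤ |(n:ℝ)| * |2 * π| := by
            apply mul_le_mul this (by rw [abs_of_pos (by positivity)]; exact hpi) (by norm_num) (abs_nonneg _)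
      linarith
    rw [hn0] at hr; simp at hr; linarith
  have := Polynomial.eq_zero_of_infinite_isRoot _ hroot
  have := sub_eq_zero.mp this
  exact this

end TrigAux

namespace TrigAux
open Complex Polynomial

lemma cos_mem : Real.cos ∈ TrigPolyRing := Algebra.subset_adjoin (by simp)
lemma sin_mem : Real.sin ∈ TrigPolyRing := Algebra.subset_adjoin (by simp)

lemma repM_exists {F : ℝ → ℝ} (hF : F ∈ TrigPolyRing) : ∃ ℓ f, RepM F ℓ f := by
  refine Algebra.adjoin_induction (fun x hx => ?_) (fun r => ?_)
    (fun x y hx hy ihx ihy => ?_) (fun x y hx hy ihx ihy => ?_) hF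
  · rcases hx with hx | hx
    · subst hx
      refine ⟨1, Polynomial.C (1/2 : ℂ) * (Polynomial.X ^ 2 + 1), fun t => ?_⟩
      have h := E_mul_E_neg t
      have h1 : Complex.exp (-(t:ℂ) * I) = E (-t) := by rw [E]; push_cast; ring_nf
      have h2 : Complex.exp ((t:ℂ) * I) = E t := rfl
      simp only [pow_one, Polynomial.eval_mul, Polynomial.eval_C, Polynomial.eval_add,
        Polynomial.eval_pow, Polynomial.eval_X, Polynomial.eval_one]
      rw [Complex.ofReal_cos, Complex.cos, h1, h2]
      linear_combination (1/2 : ℂ) * h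
    · subst hx
      refine ⟨1, Polynomial.C (I/2 : ℂ) * (1 - Polynomial.X ^ 2), fun t => ?_⟩
      have h := E_mul_E_neg t
      have h1 : Complex.exp (-(t:ℂ) * I) = E (-t) := by rw [E]; push_cast; ring_nf
      have h2 : Complex.exp ((t:ℂ) * I) = E t := rfl
      simp only [pow_one, Polynomial.eval_mul, Polynomial.eval_C, Polynomial.eval_sub,
        Polynomial.eval_pow, Polynomial.eval_X, Polynomial.eval_one]
      rw [Complex.ofReal_sin, Complex.sin, h1, h2]
      linear_combination (I/2 : ℂ) * h
  · refine ⟨0, Polynomial.C (r : ℂ), fun t => ?_⟩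
    simp [Pi.algebraMap_apply, Algebra.algebraMap_self_apply]
  · obtain ⟨ℓ₁, f₁, h1⟩ := ihx
    obtain ⟨ℓ₂, f₂, h2⟩ := ihy
    refine ⟨ℓ₁ + ℓ₂, f₁ * Polynomial.X ^ ℓ₂ + f₂ * Polynomial.X ^ ℓ₁, fun t => ?_⟩
    have e1 := h1 t
    have e2 := h2 t
    simp only [Pi.add_apply, Polynomial.eval_add, Polynomial.eval_mul, Polynomial.eval_pow,
      Polynomial.eval_X]
    push_cast
    rw [pow_add]
    linear_combination E t ^ ℓ₂ * e1 + E t ^ ℓ₁ * e2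
  · obtain ⟨ℓ₁, f₁, h1⟩ := ihx
    obtain ⟨ℓ₂, f₂, h2⟩ := ihy
    refine ⟨ℓ₁ + ℓ₂, f₁ * f₂, fun t => ?_⟩
    have e1 := h1 t
    have e2 := h2 t
    simp only [Pi.mul_apply, Polynomial.eval_mul]
    push_cast
    rw [pow_add]
    linear_combination (((y t : ℂ)) * E t ^ ℓ₂) * e1 + Polynomial.eval (E t) f₁ * e2

lemma exists_hasDerivAt {F : ℝ → ℝ} (hF : F ∈ TrigPolyRing) :
    ∃ G, G ∈ TrigPolyRing ∧ ∀ t, HasDerivAt F (G t) t := by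
  refine Algebra.adjoin_induction (fun x hx => ?_) (fun r => ?_)
    (fun x y hx hy ihx ihy => ?_) (fun x y hx hy ihx ihy => ?_) hF
  · rcases hx with hx | hx
    · subst hx
      exact ⟨-Real.sin, neg_mem sin_mem, fun t => by
        simpa using Real.hasDerivAt_cos t⟩
    · subst hx
      exact ⟨Real.cos, cos_mem, fun t => Real.hasDerivAt_sin t⟩
  · refine ⟨0, zero_mem _, fun t => ?_⟩
    have : (algebraMap ℝ (ℝ → ℝ) r) = fun _ => r := rfl
    rw [this]
    simpa using hasDerivAt_const t r
  · obtain ⟨G₁, hG₁, h1⟩ := ihx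
    obtain ⟨G₂, hG₂, h2⟩ := ihy
    exact ⟨G₁ + G₂, add_mem hG₁ hG₂, fun t => by simpa using (h1 t).add (h2 t)⟩
  · obtain ⟨G₁, hG₁, h1⟩ := ihx
    obtain ⟨G₂, hG₂, h2⟩ := ihy
    exact ⟨G₁ * y + x * G₂, add_mem (mul_mem hG₁ hy) (mul_mem hx hG₂), fun t => by
      simpa using (h1 t).mul (h2 t)⟩

lemma differentiable_of_mem {F : ℝ → ℝ} (hF : F ∈ TrigPolyRing) : Differentiable ℝ F := by
  obtain ⟨G, _, h⟩ := exists_hasDerivAt hF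
  exact fun t => (h t).differentiableAt

lemma continuous_of_mem {F : ℝ → ℝ} (hF : F ∈ TrigPolyRing) : Continuous F :=
  (differentiable_of_mem hF).continuous

lemma deriv_mem {F : ℝ → ℝ} (hF : F ∈ TrigPolyRing) : deriv F ∈ TrigPolyRing := by
  obtain ⟨G, hG, h⟩ := exists_hasDerivAt hF
  have : deriv F = G := funext fun t => (h t).deriv
  rwa [this]

end TrigAux

namespace TrigAux
open Complex Polynomial

lemma cos_sin_nat_mem (n : ℕ) :
    (fun t => Real.cos (n * t)) ∈ TrigPolyRing ∧ (fun t => Real.sin (n * t)) ∈ TrigPolyRing := by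
  induction n with
  | zero =>
      constructor
      · have : (fun t : ℝ => Real.cos ((0:ℕ) * t)) = algebraMap ℝ (ℝ → ℝ) 1 := by
          funext t; simp
        rw [this]; exact Subalgebra.algebraMap_mem _ _
      · have : (fun t : ℝ => Real.sin ((0:ℕ) * t)) = algebraMap ℝ (ℝ → ℝ) 0 := by
          funext t; simp
        rw [this]; exact Subalgebra.algebraMap_mem _ _
  | succ n ih =>
      obtain ⟨hc, hs⟩ := ih
      constructor
      · have : (fun t : ℝ => Real.cos ((n+1 : ℕ) * t)) =
            (fun t => Real.cos (n * t)) * Real.cos - (fun t => Real.sin (n * t)) * Real.sin := by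
          funext t
          simp only [Pi.sub_apply, Pi.mul_apply]
          rw [show ((n+1 : ℕ) : ℝ) * t = n * t + t by push_cast; ring, Real.cos_add]
        rw [this]
        exact sub_mem (mul_mem hc cos_mem) (mul_mem hs sin_mem)
      · have : (fun t : ℝ => Real.sin ((n+1 : ℕ) * t)) =
            (fun t => Real.sin (n * t)) * Real.cos + (fun t => Real.cos (n * t)) * Real.sin := by
          funext t
          simp only [Pi.add_apply, Pi.mul_apply]
          rw [show ((n+1 : ℕ) : ℝ) * t = n * t + t by push_cast; ring, Real.sin_add]
        rw [this]
        exact add_mem (mul_mem hs cos_mem) (mul_mem hc sin_mem)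

lemma int_cast_cases (m : ℤ) : ((m:ℝ) = (m.natAbs:ℝ)) ∨ ((m:ℝ) = -(m.natAbs:ℝ)) := by
  rcases Int.natAbs_eq m with h | h
  · left
    have h0 : (0:ℤ) ≤ m := by rw [h]; exact Int.ofNat_nonneg _
    have habs : |m| = m := abs_of_nonneg h0
    rw [Nat.cast_natAbs, habs]
  · right
    have h0 : m ≤ 0 := by rw [h]; exact neg_nonpos_of_nonneg (Int.ofNat_nonneg _)
    have habs : |m| = -m := abs_of_nonpos h0
    rw [Nat.cast_natAbs, habs]
    push_cast
    ring

lemma cos_int_mem (m : ℤ) : (fun t => Real.cos (m * t)) ∈ TrigPolyRing := by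
  rcases int_cast_cases m with h | h
  · have heq : (fun t => Real.cos ((m:ℝ) * t)) = fun t => Real.cos ((m.natAbs : ℝ) * t) := by
      funext t; rw [h]
    rw [heq]; exact (cos_sin_nat_mem m.natAbs).1
  · have heq : (fun t => Real.cos ((m:ℝ) * t)) = fun t => Real.cos ((m.natAbs : ℝ) * t) := by
      funext t; rw [h, neg_mul, Real.cos_neg]
    rw [heq]; exact (cos_sin_nat_mem m.natAbs).1

lemma sin_int_mem (m : ℤ) : (fun t => Real.sin (m * t)) ∈ TrigPolyRing := by
  rcases int_cast_cases m with h | h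
  · have heq : (fun t => Real.sin ((m:ℝ) * t)) = fun t => Real.sin ((m.natAbs : ℝ) * t) := by
      funext t; rw [h]
    rw [heq]; exact (cos_sin_nat_mem m.natAbs).2
  · have heq : (fun t => Real.sin ((m:ℝ) * t)) = -fun t => Real.sin ((m.natAbs : ℝ) * t) := by
      funext t; simp only [Pi.neg_apply]; rw [h, neg_mul, Real.sin_neg]
    rw [heq]; exact neg_mem (cos_sin_nat_mem m.natAbs).2

/-- A real-valued function with a representation is a trig polynomial. -/
lemma mem_of_repM {F : ℝ → ℝ} {ℓ : ℕ} {f : ℂ[X]} (h : RepM F ℓ f) : F ∈ TrigPolyRing := by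
  classical
  set D := f.natDegree with hD
  have key : ∀ t : ℝ, (F t : ℂ) =
      ∑ k ∈ Finset.range (D + 1), f.coeff k * Complex.exp ((((k : ℤ) - ℓ : ℤ) : ℝ) * t * I) := by
    intro t
    have h0 := h t
    have hpow : ∀ k : ℕ, f.coeff k * Complex.exp ((((k : ℤ) - ℓ : ℤ) : ℝ) * t * I) * E t ^ ℓ
        = f.coeff k * E t ^ k := by
      intro k
      have : Complex.exp ((((k : ℤ) - ℓ : ℤ) : ℝ) * t * I) * E t ^ ℓ = E t ^ k := by
        rw [show E t ^ ℓ = Complex.exp ((ℓ : ℂ) * (t * I)) by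
            rw [E, ← Complex.exp_nat_mul],
          show E t ^ k = Complex.exp ((k : ℂ) * (t * I)) by
            rw [E, ← Complex.exp_nat_mul],
          ← Complex.exp_add]
        congr 1
        push_cast
        ring
      rw [mul_assoc, this]
    have hsum : (∑ k ∈ Finset.range (D + 1), f.coeff k *
          Complex.exp ((((k : ℤ) - ℓ : ℤ) : ℝ) * t * I)) * E t ^ ℓ
        = ∑ k ∈ Finset.range (D + 1), f.coeff k * E t ^ k := by
      rw [Finset.sum_mul]
      exact Finset.sum_congr rfl fun k _ => hpow k
    have heval : f.eval (E t) = ∑ k ∈ Finset.range (D + 1), f.coeff k * E t ^ k :=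
      Polynomial.eval_eq_sum_range _
    have hc : (F t : ℂ) * E t ^ ℓ =
        (∑ k ∈ Finset.range (D + 1), f.coeff k *
          Complex.exp ((((k : ℤ) - ℓ : ℤ) : ℝ) * t * I)) * E t ^ ℓ := by
      rw [hsum, ← heval, h0]
    exact mul_right_cancel₀ (pow_ne_zero _ (E_ne_zero t)) hc
  have hFeq : F = fun t => ∑ k ∈ Finset.range (D + 1),
      ((f.coeff k).re * Real.cos ((((k : ℤ) - ℓ : ℤ) : ℝ) * t)
        - (f.coeff k).im * Real.sin ((((k : ℤ) - ℓ : ℤ) : ℝ) * t)) := by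
    funext t
    have h1 : F t = ((F t : ℂ)).re := by simp
    rw [h1, key t, Complex.re_sum]
    refine Finset.sum_congr rfl fun k _ => ?_
    have harg : ((((k:ℤ) - ℓ:ℤ):ℝ):ℂ) * (t:ℂ) * I = (((((k:ℤ) - ℓ:ℤ):ℝ) * t : ℝ) : ℂ) * I := by
      push_cast; ring
    rw [Complex.mul_re, harg, Complex.exp_ofReal_mul_I_re, Complex.exp_ofReal_mul_I_im]
  rw [hFeq]
  have : (fun t => ∑ k ∈ Finset.range (D + 1),
      ((f.coeff k).re * Real.cos ((((k : ℤ) - ℓ : ℤ) : ℝ) * t)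
        - (f.coeff k).im * Real.sin ((((k : ℤ) - ℓ : ℤ) : ℝ) * t))) =
      ∑ k ∈ Finset.range (D + 1),
        ((algebraMap ℝ (ℝ → ℝ) (f.coeff k).re) * (fun t => Real.cos ((((k : ℤ) - ℓ : ℤ) : ℝ) * t))
          - (algebraMap ℝ (ℝ → ℝ) (f.coeff k).im) * (fun t => Real.sin ((((k : ℤ) - ℓ : ℤ) : ℝ) * t))) := by
    funext t
    rw [Finset.sum_apply]
    exact Finset.sum_congr rfl fun k _ => rfl
  rw [this]
  refine Subalgebra.sum_mem _ fun k _ => ?_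
  exact sub_mem (mul_mem (Subalgebra.algebraMap_mem _ _) (cos_int_mem _))
    (mul_mem (Subalgebra.algebraMap_mem _ _) (sin_int_mem _))

end TrigAux

namespace TrigAux
open Complex Polynomial

lemma E_pow (n : ℕ) (t : ℝ) : E t ^ n = Complex.exp ((n:ℝ) * t * I) := by
  rw [E, ← Complex.exp_nat_mul]; congr 1; push_cast; ring

lemma hasDerivAt_E_pow (ℓ : ℕ) (t : ℝ) :
    HasDerivAt (fun s => E s ^ ℓ) ((ℓ:ℂ) * I * E t ^ ℓ) t := by
  induction ℓ with
  | zero => simpa using hasDerivAt_const t (1:ℂ)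
  | succ n ih =>
      have h := ih.mul (hasDerivAt_E t)
      have heq : (fun s => E s ^ n * E s) = fun s => E s ^ (n+1) := by
        funext s; rw [pow_succ]
      rw [show ((fun s => E s ^ n) * E) = fun s => E s ^ (n+1) from heq] at h
      refine h.congr_deriv ?_
      rw [pow_succ]; push_cast; ring

/-- Representation of the derivative. -/
lemma repM_deriv {F F' : ℝ → ℝ} {ℓ : ℕ} {f : ℂ[X]}
    (hrep : RepM F ℓ f) (hd : ∀ t, HasDerivAt F (F' t) t) :
    RepM F' ℓ (Polynomial.C I * (Polynomial.X * f.derivative - Polynomial.C (ℓ:ℂ) * f)) := by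
  intro t
  have hΦ : HasDerivAt (fun s => (F s : ℂ) * E s ^ ℓ)
      ((F' t : ℂ) * E t ^ ℓ + (F t : ℂ) * ((ℓ:ℂ) * I * E t ^ ℓ)) t := by
    have h1 : HasDerivAt (fun y : ℝ => ((F y : ℝ) : ℂ)) ((F' t : ℝ) : ℂ) t := (hd t).ofReal_comp
    exact h1.mul (hasDerivAt_E_pow ℓ t)
  have hΨ : HasDerivAt (fun s => (F s : ℂ) * E s ^ ℓ)
      (f.derivative.eval (E t) * (I * E t)) t := by
    have : (fun s => (F s : ℂ) * E s ^ ℓ) = fun s => f.eval (E s) := funext fun s => hrep s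
    rw [this]
    exact hasDerivAt_eval_E f t
  have huniq := hΦ.unique hΨ
  have h0 := hrep t
  simp only [Polynomial.eval_mul, Polynomial.eval_C, Polynomial.eval_sub, Polynomial.eval_X]
  linear_combination huniq - ((ℓ:ℂ) * I) * h0

end TrigAux

namespace TrigAux
open Complex Polynomial

lemma conj_eval (u : ℂ[X]) (z : ℂ) :
    (starRingEnd ℂ) (u.eval z) = (u.map (starRingEnd ℂ)).eval ((starRingEnd ℂ) z) := by
  rw [Polynomial.eval_map, Polynomial.eval₂_hom]

def refl (u : ℂ[X]) : ℂ[X] :=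
  ∑ k ∈ Finset.range (u.natDegree + 1), Polynomial.C (u.coeff (u.natDegree - k)) * Polynomial.X ^ k

lemma refl_eval (u : ℂ[X]) {z : ℂ} (hz : z ≠ 0) :
    (refl u).eval z = z ^ u.natDegree * u.eval z⁻¹ := by
  classical
  set D := u.natDegree with hD
  have h1 : u.eval z⁻¹ = ∑ j ∈ Finset.range (D + 1), u.coeff j * (z⁻¹) ^ j :=
    Polynomial.eval_eq_sum_range _
  have h2 : z ^ D * u.eval z⁻¹ = ∑ j ∈ Finset.range (D + 1), u.coeff j * z ^ (D - j) := by
    rw [h1, Finset.mul_sum]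
    refine Finset.sum_congr rfl fun j hj => ?_
    have hjD : j ≤ D := Nat.lt_succ_iff.mp (Finset.mem_range.mp hj)
    have hzj : z ^ D = z ^ (D - j) * z ^ j := by
      rw [← pow_add, Nat.sub_add_cancel hjD]
    rw [hzj, inv_pow]
    field_simp
  have h3 : (refl u).eval z = ∑ k ∈ Finset.range (D + 1), u.coeff (D - k) * z ^ k := by
    rw [refl]
    simp [hD, Polynomial.eval_finset_sum]
  rw [h3, h2]
  rw [← Finset.sum_range_reflect (fun j => u.coeff j * z ^ (D - j)) (D + 1)]
  refine Finset.sum_congr rfl fun k hk => ?_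
  have hkD : k ≤ D := Nat.lt_succ_iff.mp (Finset.mem_range.mp hk)
  have e1 : D + 1 - 1 - k = D - k := by omega
  have e2 : D - (D - k) = k := by omega
  rw [e1, e2]

/-- Realness forces root symmetry `α ↦ (conj α)⁻¹`. -/
lemma root_inv_conj {U : ℝ → ℝ} {ℓ : ℕ} {u : ℂ[X]} (hrep : RepM U ℓ u)
    {α : ℂ} (hα : α ≠ 0) (hroot : u.eval α = 0) :
    u.eval ((starRingEnd ℂ α)⁻¹) = 0 := by
  classical
  set D := u.natDegree with hD
  set w := refl u with hw
  have hPI : Polynomial.X ^ D * u.map (starRingEnd ℂ) = Polynomial.X ^ (2 * ℓ) * w := by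
    apply poly_eq_of_circle
    intro t
    have hab : E t * E (-t) = 1 := E_mul_E_neg t
    have hab' : E t ^ ℓ * E (-t) ^ ℓ = 1 := by rw [← mul_pow, hab, one_pow]
    have habD : E t ^ D * E (-t) ^ D = 1 := by rw [← mul_pow, hab, one_pow]
    have hA : (U (-t) : ℂ) * E t ^ ℓ = (u.map (starRingEnd ℂ)).eval (E t) := by
      have := congrArg (starRingEnd ℂ) (hrep (-t))
      rw [map_mul, map_pow, conj_E, neg_neg, conj_eval, conj_E, neg_neg] at this
      simpa using this
    have hB : (U (-t) : ℂ) * E (-t) ^ ℓ = u.eval (E (-t)) := hrep (-t)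
    have hws : w.eval (E t) = E t ^ D * u.eval (E (-t)) := by
      rw [hw, refl_eval u (E_ne_zero t), E_inv, hD]
    simp only [Polynomial.eval_mul, Polynomial.eval_pow, Polynomial.eval_X]
    rw [← hA, hws, ← hB]
    linear_combination (-(E t ^ D * E t ^ ℓ * (U (-t):ℂ))) * hab'
  set β := (starRingEnd ℂ) α with hβ
  have hβ0 : β ≠ 0 := by
    rw [hβ]
    simpa using hα
  have hf : (Polynomial.X ^ D * u.map (starRingEnd ℂ)).eval β = 0 := by
    have h0 : (u.map (starRingEnd ℂ)).eval β = 0 := by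
      rw [hβ, ← conj_eval, hroot, map_zero]
    simp [h0]
  have hg : (Polynomial.X ^ (2*ℓ) * w).eval β = 0 := by rw [← hPI]; exact hf
  have hw0 : w.eval β = 0 := by
    simp only [Polynomial.eval_mul, Polynomial.eval_pow, Polynomial.eval_X] at hg
    rcases mul_eq_zero.mp hg with h | h
    · exact absurd h (pow_ne_zero _ hβ0)
    · exact h
  have hre := refl_eval u hβ0
  rw [← hw, hw0] at hre
  rcases mul_eq_zero.mp hre.symm with h | h
  · exact absurd h (pow_ne_zero _ hβ0)
  · exact h

end TrigAux

namespace TrigAux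
open Complex Polynomial

lemma rep_monomial_const {V : ℝ → ℝ} {ℓ j : ℕ} {c : ℂ}
    (h : RepM V ℓ (Polynomial.C c * Polynomial.X ^ j)) (hc : c ≠ 0) :
    c.im = 0 ∧ ∀ t, V t = c.re := by
  set r : ℝ := (j : ℝ) - ℓ with hr'
  have key : ∀ t : ℝ, (V t : ℂ) = c * Complex.exp ((r:ℂ) * t * I) := by
    intro t
    have h0 := h t
    simp only [Polynomial.eval_mul, Polynomial.eval_C, Polynomial.eval_pow,
      Polynomial.eval_X] at h0
    have h1 : c * Complex.exp ((r:ℂ) * t * I) * E t ^ ℓ = c * E t ^ j := by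
      rw [E_pow, E_pow, mul_assoc, ← Complex.exp_add]
      congr 2
      push_cast [hr']
      ring
    exact mul_right_cancel₀ (pow_ne_zero _ (E_ne_zero t)) (h0.trans h1.symm)
  have hconj : ∀ t : ℝ, c * Complex.exp ((r:ℂ) * t * I)
      = (starRingEnd ℂ) c * Complex.exp (-((r:ℂ) * t * I)) := by
    intro t
    have h0 := congrArg (starRingEnd ℂ) (key t)
    rw [Complex.conj_ofReal, map_mul, ← Complex.exp_conj] at h0
    have h1 : (starRingEnd ℂ) ((r:ℂ) * t * I) = -((r:ℂ) * t * I) := by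
      simp [Complex.conj_I]
    rw [h1] at h0
    rw [← key t, h0]
  have hcc : (starRingEnd ℂ) c = c := by
    have h0 := hconj 0
    simpa using h0.symm
  have him : c.im = 0 := by
    have := congrArg Complex.im hcc
    simp at this
    linarith [this]
  by_cases hr : r = 0
  · refine ⟨him, fun t => ?_⟩
    have h0 := key t
    rw [hr] at h0
    simp at h0
    have : (V t : ℂ) = c := by simpa using h0
    calc V t = ((V t : ℂ)).re := by simp
    _ = c.re := by rw [this]
  · exfalso
    have h2 : ∀ t : ℝ, Complex.exp ((r:ℂ) * t * I) = Complex.exp (-((r:ℂ) * t * I)) := by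
      intro t
      have h0 := hconj t
      rw [hcc] at h0
      exact mul_left_cancel₀ hc h0
    set t0 : ℝ := π / (2 * r) with ht0
    have h3 : Complex.exp ((r:ℂ) * t0 * I) * Complex.exp ((r:ℂ) * t0 * I) = 1 := by
      nth_rewrite 2 [h2 t0]
      rw [← Complex.exp_add]
      simp
    have h4 : Complex.exp ((r:ℂ) * t0 * I) * Complex.exp ((r:ℂ) * t0 * I)
        = Complex.exp ((π:ℂ) * I) := by
      rw [← Complex.exp_add]
      congr 1
      have hrc : (r:ℂ) ≠ 0 := Complex.ofReal_ne_zero.mpr hr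
      have : (r:ℂ) * t0 = π / 2 := by
        rw [ht0]
        push_cast
        field_simp
      rw [this]
      ring
    rw [h4, Complex.exp_pi_mul_I] at h3
    norm_num at h3

lemma eq_C_mul_X_pow_of_roots_zero (v : ℂ[X])
    (hroots : ∀ z : ℂ, v.IsRoot z → z = 0) :
    v = Polynomial.C v.leadingCoeff * Polynomial.X ^ v.natDegree := by
  have hcard : v.roots.card = v.natDegree :=
    Polynomial.splits_iff_card_roots.mp (IsAlgClosed.splits v)
  have hprod := Polynomial.C_leadingCoeff_mul_prod_multiset_X_sub_C hcard
  have hmap : v.roots.map (fun a => Polynomial.X - Polynomial.C a)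
      = v.roots.map (fun _ => (Polynomial.X : ℂ[X])) := by
    apply Multiset.map_congr rfl
    intro r hr
    have : r = 0 := hroots r (Polynomial.isRoot_of_mem_roots hr)
    rw [this]
    simp
  rw [hmap] at hprod
  rw [Multiset.map_const', Multiset.prod_replicate, hcard] at hprod
  exact hprod.symm

lemma isUnit_of_const {V : TrigPolyRing} {c : ℝ} (hc : c ≠ 0)
    (h : ∀ t, (V : ℝ → ℝ) t = c) : IsUnit V := by
  have hV : V = algebraMap ℝ TrigPolyRing c := by
    apply Subtype.ext
    funext t
    exact h t
  rw [hV]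
  exact (isUnit_iff_ne_zero.mpr hc).map (algebraMap ℝ TrigPolyRing)

end TrigAux

namespace TrigAux
open Complex Polynomial

def Gfun (α : ℂ) : ℝ → ℝ :=
  fun t => 1 + Complex.normSq α - 2 * α.re * Real.cos t - 2 * α.im * Real.sin t

def gpoly (α : ℂ) : ℂ[X] :=
  (Polynomial.X - Polynomial.C α) * (1 - Polynomial.C ((starRingEnd ℂ) α) * Polynomial.X)

lemma Gfun_mem (α : ℂ) : Gfun α ∈ TrigPolyRing := by
  have : Gfun α = algebraMap ℝ (ℝ → ℝ) (1 + Complex.normSq α)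
      - algebraMap ℝ (ℝ → ℝ) (2 * α.re) * Real.cos
      - algebraMap ℝ (ℝ → ℝ) (2 * α.im) * Real.sin := by
    funext t; rfl
  rw [this]
  exact sub_mem (sub_mem (Subalgebra.algebraMap_mem _ _)
    (mul_mem (Subalgebra.algebraMap_mem _ _) cos_mem))
    (mul_mem (Subalgebra.algebraMap_mem _ _) sin_mem)

lemma E_re (t : ℝ) : (E t).re = Real.cos t := by
  rw [E]; exact Complex.exp_ofReal_mul_I_re t

lemma E_im (t : ℝ) : (E t).im = Real.sin t := by
  rw [E]; exact Complex.exp_ofReal_mul_I_im t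

lemma Gfun_eq_normSq (α : ℂ) (t : ℝ) : Gfun α t = Complex.normSq (E t - α) := by
  rw [Gfun, Complex.normSq_sub]
  rw [Complex.normSq_apply, Complex.normSq_apply]
  have h1 : (E t).re ^ 2 + (E t).im ^ 2 = 1 := by
    rw [E_re, E_im]; rw [← Real.sin_sq_add_cos_sq t]; ring
  have h2 : (E t * (starRingEnd ℂ) α).re = α.re * Real.cos t + α.im * Real.sin t := by
    rw [Complex.mul_re, E_re, E_im]
    simp [Complex.conj_re, Complex.conj_im]
    ring
  rw [h2]
  nlinarith [h1]

lemma abs_E (t : ℝ) : ‖E t‖ = 1 := by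
  rw [E]; exact Complex.norm_exp_ofReal_mul_I t

lemma Gfun_pos {α : ℂ} (habs : ‖α‖ ≠ 1) (t : ℝ) : 0 < Gfun α t := by
  rw [Gfun_eq_normSq]
  apply Complex.normSq_pos.mpr
  intro h
  have : E t = α := sub_eq_zero.mp h
  rw [← this] at habs
  exact habs (abs_E t)

lemma Gfun_rep (α : ℂ) : RepM (Gfun α) 1 (gpoly α) := by
  intro t
  have hab : E t * E (-t) = 1 := E_mul_E_neg t
  have hE : E (-t) = Complex.exp (-(t:ℂ) * I) := by rw [E]; push_cast; ring_nf
  have hcos : Complex.cos (t:ℂ) = (E t + E (-t)) / 2 := by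
    rw [Complex.cos, hE, E]
  have hsin : Complex.sin (t:ℂ) = (E (-t) - E t) * I / 2 := by
    rw [Complex.sin, hE, E]
  have hre : (α.re : ℂ) = (α + (starRingEnd ℂ) α) / 2 := by
    rw [Complex.add_conj]; push_cast; ring
  have him' : (α.im : ℂ) * I = (α - (starRingEnd ℂ) α) / 2 := by
    rw [Complex.sub_conj]; push_cast; ring
  have hns : ((Complex.normSq α : ℝ) : ℂ) = α * (starRingEnd ℂ) α := by
    rw [← Complex.mul_conj]
  rw [gpoly]
  simp only [Polynomial.eval_mul, Polynomial.eval_sub, Polynomial.eval_one, Polynomial.eval_X,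
    Polynomial.eval_C, Gfun]
  push_cast
  rw [hcos, hsin, hre, hns]
  linear_combination (-α) * hab + ((E t - E (-t)) * E t) * him'

end TrigAux

namespace TrigAux
open Complex Polynomial

def Gelem (α : ℂ) : TrigPolyRing := ⟨Gfun α, Gfun_mem α⟩

lemma rep_ne_zero {W : ℝ → ℝ} {ℓ : ℕ} {w : ℂ[X]} (hrep : RepM W ℓ w)
    (hW : ∃ t, W t ≠ 0) : w ≠ 0 := by
  rintro rfl
  obtain ⟨t, ht⟩ := hW
  have := hrep t
  simp at this
  rcases this with h | h
  · exact ht h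
  · exact E_ne_zero t h.1

lemma dvd_of_root {W : TrigPolyRing} {ℓ : ℕ} {w : ℂ[X]} (hrep : RepM (W : ℝ → ℝ) ℓ w)
    {α : ℂ} (hα : α ≠ 0) (habs : ‖α‖ ≠ 1) (hroot : w.eval α = 0) :
    Gelem α ∣ W := by
  classical
  set β : ℂ := ((starRingEnd ℂ) α)⁻¹ with hβ
  have hcα : (starRingEnd ℂ) α ≠ 0 := by simpa using hα
  have hβ0 : β ≠ 0 := by rw [hβ]; simp [hα]
  have hβroot : w.eval β = 0 := root_inv_conj hrep hα hroot
  have hβinv : (starRingEnd ℂ) α * β = 1 := by rw [hβ]; exact mul_inv_cancel₀ hcα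
  have hαβ : α ≠ β := by
    intro h
    apply habs
    have h1 : (starRingEnd ℂ) α * α = 1 := by
      nth_rewrite 2 [h]
      exact mul_inv_cancel₀ hcα
    have h2 : ((Complex.normSq α : ℝ) : ℂ) = 1 := by
      rw [← Complex.mul_conj, mul_comm]; exact h1
    have h3 : Complex.normSq α = 1 := by exact_mod_cast h2
    rw [Complex.norm_def, h3, Real.sqrt_one]
  have hd1 : (Polynomial.X - Polynomial.C α) ∣ w := Polynomial.dvd_iff_isRoot.mpr hroot
  have hd2 : (Polynomial.X - Polynomial.C β) ∣ w := Polynomial.dvd_iff_isRoot.mpr hβroot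
  have hcop : IsCoprime (Polynomial.X - Polynomial.C α) (Polynomial.X - Polynomial.C β) :=
    Polynomial.isCoprime_X_sub_C_of_isUnit_sub (sub_ne_zero.mpr hαβ).isUnit
  obtain ⟨h, hh⟩ := hcop.mul_dvd hd1 hd2
  set Wd : ℝ → ℝ := fun t => (W : ℝ → ℝ) t / Gfun α t with hWd
  have hGpos : ∀ t, Gfun α t ≠ 0 := fun t => ne_of_gt (Gfun_pos habs t)
  have hrepWd : RepM Wd ℓ (Polynomial.C (-β) * (Polynomial.X * h)) := by
    intro t
    have hW := hrep t
    have hwE : w.eval (E t) = (E t - α) * (E t - β) * h.eval (E t) := by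
      rw [hh]; simp [mul_assoc]
    have hgE : ((Gfun α t : ℝ) : ℂ) * E t = (E t - α) * (1 - (starRingEnd ℂ) α * E t) := by
      have h0 := Gfun_rep α t
      rw [gpoly] at h0
      simpa using h0
    have hGc : ((Gfun α t : ℝ) : ℂ) ≠ 0 := by
      exact_mod_cast hGpos t
    have G1 : ((W : ℝ → ℝ) t : ℂ) * E t ^ ℓ = -β * (E t * h.eval (E t)) * ((Gfun α t : ℝ) : ℂ) := by
      refine mul_right_cancel₀ (E_ne_zero t) ?_
      linear_combination (E t) * hW + (E t) * hwE + (β * E t * h.eval (E t)) * hgE +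
        (h.eval (E t) * E t ^ 2 * (α - E t)) * hβinv
    simp only [hWd, Polynomial.eval_mul, Polynomial.eval_C, Polynomial.eval_X]
    push_cast
    rw [div_mul_eq_mul_div, div_eq_iff hGc]
    linear_combination G1
  have hWdmem : Wd ∈ TrigPolyRing := mem_of_repM hrepWd
  refine ⟨⟨Wd, hWdmem⟩, ?_⟩
  apply Subtype.ext
  funext t
  show (W : ℝ → ℝ) t = Gfun α t * Wd t
  rw [hWd]
  rw [mul_comm, div_mul_cancel₀ _ (hGpos t)]

end TrigAux

namespace TrigAux
open Complex Polynomial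

lemma ne_inv_conj {α : ℂ} (hα : α ≠ 0) (habs : ‖α‖ ≠ 1) :
    α ≠ ((starRingEnd ℂ) α)⁻¹ := by
  intro h
  apply habs
  have hcα : (starRingEnd ℂ) α ≠ 0 := by simpa using hα
  have h1 : (starRingEnd ℂ) α * α = 1 := by
    nth_rewrite 2 [h]
    exact mul_inv_cancel₀ hcα
  have h2 : ((Complex.normSq α : ℝ) : ℂ) = 1 := by
    rw [← Complex.mul_conj, mul_comm]; exact h1
  have h3 : Complex.normSq α = 1 := by exact_mod_cast h2
  rw [Complex.norm_def, h3, Real.sqrt_one]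

/-- If `G = U * V` and `u` vanishes at `α`, then `V` is a unit. -/
lemma unit_cofactor {α : ℂ} (hα : α ≠ 0) (habs : ‖α‖ ≠ 1)
    {U V : TrigPolyRing} {ℓu ℓv : ℕ} {u v : ℂ[X]}
    (hrepu : RepM (U : ℝ → ℝ) ℓu u) (hrepv : RepM (V : ℝ → ℝ) ℓv v)
    (hG : ∀ t, Gfun α t = (U : ℝ → ℝ) t * (V : ℝ → ℝ) t)
    (hu : u.eval α = 0) : IsUnit V := by
  classical
  set β : ℂ := ((starRingEnd ℂ) α)⁻¹ with hβ
  have hcα : (starRingEnd ℂ) α ≠ 0 := by simpa using hα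
  have hβinv : (starRingEnd ℂ) α * β = 1 := by rw [hβ]; exact mul_inv_cancel₀ hcα
  have hαβ : α ≠ β := ne_inv_conj hα habs
  have hβroot : u.eval β = 0 := root_inv_conj hrepu hα hu
  have hd1 : (Polynomial.X - Polynomial.C α) ∣ u := Polynomial.dvd_iff_isRoot.mpr hu
  have hd2 : (Polynomial.X - Polynomial.C β) ∣ u := Polynomial.dvd_iff_isRoot.mpr hβroot
  have hcop : IsCoprime (Polynomial.X - Polynomial.C α) (Polynomial.X - Polynomial.C β) :=
    Polynomial.isCoprime_X_sub_C_of_isUnit_sub (sub_ne_zero.mpr hαβ).isUnit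
  obtain ⟨h, hufact⟩ := hcop.mul_dvd hd1 hd2
  set N := ℓu + ℓv with hN
  have hPI : Polynomial.X ^ N * gpoly α = Polynomial.X * (u * v) := by
    apply poly_eq_of_circle
    intro t
    have h1 := hrepu t
    have h2 := hrepv t
    have h3 := Gfun_rep α t
    have h4 := hG t
    simp only [Polynomial.eval_mul, Polynomial.eval_pow, Polynomial.eval_X]
    rw [← h1, ← h2]
    have h5 : ((Gfun α t : ℝ) : ℂ) = ((U : ℝ → ℝ) t : ℂ) * ((V : ℝ → ℝ) t : ℂ) := by
      rw [h4]; push_cast; ring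
    rw [← h3, h5, hN]
    ring
  have hCβ : Polynomial.C ((starRingEnd ℂ) α) * Polynomial.C β = 1 := by
    rw [← Polynomial.C_mul, hβinv, Polynomial.C_1]
  have hgfact : gpoly α = Polynomial.C (-(starRingEnd ℂ) α) *
      ((Polynomial.X - Polynomial.C α) * (Polynomial.X - Polynomial.C β)) := by
    rw [gpoly]
    simp only [map_neg]
    linear_combination (-(Polynomial.X - Polynomial.C α)) * hCβ
  have key : ((Polynomial.X - Polynomial.C α) * (Polynomial.X - Polynomial.C β)) *
      (Polynomial.C (-(starRingEnd ℂ) α) * Polynomial.X ^ N)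
      = ((Polynomial.X - Polynomial.C α) * (Polynomial.X - Polynomial.C β)) *
      (Polynomial.X * (h * v)) := by
    simp only [map_neg] at hgfact ⊢
    linear_combination hPI - Polynomial.X ^ N * hgfact + Polynomial.X * v * hufact
  have hM : (Polynomial.X - Polynomial.C α) * (Polynomial.X - Polynomial.C β) ≠ 0 :=
    mul_ne_zero (Polynomial.X_sub_C_ne_zero α) (Polynomial.X_sub_C_ne_zero β)
  have hcancel := mul_left_cancel₀ hM key
  have hV0 : (V : ℝ → ℝ) 0 ≠ 0 := by
    intro h0
    have := Gfun_pos habs 0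
    rw [hG 0, h0, mul_zero] at this
    exact lt_irrefl _ this
  have hv0 : v ≠ 0 := rep_ne_zero hrepv ⟨0, hV0⟩
  have hroots : ∀ z : ℂ, v.IsRoot z → z = 0 := by
    intro z hz
    by_contra hz0
    have h9 := congrArg (Polynomial.eval z) hcancel
    simp only [Polynomial.eval_mul, Polynomial.eval_pow, Polynomial.eval_X,
      Polynomial.eval_C, Polynomial.eval_neg] at h9
    rw [Polynomial.IsRoot] at hz
    rw [hz, mul_zero, mul_zero] at h9
    exact mul_ne_zero (by simpa using hcα) (pow_ne_zero N hz0) h9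
  have hvC := eq_C_mul_X_pow_of_roots_zero v hroots
  have hlc : v.leadingCoeff ≠ 0 := Polynomial.leadingCoeff_ne_zero.mpr hv0
  rw [hvC] at hrepv
  obtain ⟨him, hconst⟩ := rep_monomial_const hrepv hlc
  have hre : v.leadingCoeff.re ≠ 0 := by
    intro h0
    apply hlc
    apply Complex.ext <;> simp [h0, him]
  exact isUnit_of_const hre hconst

end TrigAux

namespace TrigAux
open Complex Polynomial

lemma Gelem_irreducible {α : ℂ} (hα : α ≠ 0) (habs : ‖α‖ ≠ 1) :
    Irreducible (Gelem α) := by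
  constructor
  · intro hU
    obtain ⟨V, hV⟩ := isUnit_iff_exists_inv.mp hU
    obtain ⟨ℓv, v, hrepv⟩ := repM_exists V.2
    have hPI : gpoly α * v = Polynomial.X ^ (1 + ℓv) := by
      apply poly_eq_of_circle
      intro t
      have h1 := Gfun_rep α t
      have h2 := hrepv t
      have h3 : Gfun α t * (V : ℝ → ℝ) t = 1 := by
        have h4 := congrArg (fun W : TrigPolyRing => (W : ℝ → ℝ) t) hV
        simpa [Gelem] using h4
      have h4 : ((Gfun α t : ℝ) : ℂ) * (((V : ℝ → ℝ) t : ℝ) : ℂ) = 1 := by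
        rw [← Complex.ofReal_mul, h3, Complex.ofReal_one]
      simp only [Polynomial.eval_mul, Polynomial.eval_pow, Polynomial.eval_X]
      rw [← h1, ← h2]
      linear_combination (E t ^ (1 + ℓv)) * h4
    have h5 := congrArg (Polynomial.eval α) hPI
    simp only [Polynomial.eval_mul, Polynomial.eval_pow, Polynomial.eval_X, gpoly,
      Polynomial.eval_sub, Polynomial.eval_one, Polynomial.eval_C] at h5
    rw [sub_self, zero_mul, zero_mul] at h5
    exact hα (pow_eq_zero_iff (by omega : 1 + ℓv ≠ 0) |>.mp h5.symm)
  · rintro U V hUV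
    obtain ⟨ℓu, u, hrepu⟩ := repM_exists U.2
    obtain ⟨ℓv, v, hrepv⟩ := repM_exists V.2
    have hG : ∀ t, Gfun α t = (U : ℝ → ℝ) t * (V : ℝ → ℝ) t := by
      intro t
      have h4 := congrArg (fun W : TrigPolyRing => (W : ℝ → ℝ) t) hUV
      simpa [Gelem] using h4
    have hPI : Polynomial.X ^ (ℓu + ℓv) * gpoly α = Polynomial.X * (u * v) := by
      apply poly_eq_of_circle
      intro t
      have h1 := hrepu t
      have h2 := hrepv t
      have h3 := Gfun_rep α t
      simp only [Polynomial.eval_mul, Polynomial.eval_pow, Polynomial.eval_X]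
      rw [← h1, ← h2]
      have h5 : ((Gfun α t : ℝ) : ℂ) = (((U : ℝ → ℝ) t : ℝ) : ℂ) * (((V : ℝ → ℝ) t : ℝ) : ℂ) := by
        rw [← Complex.ofReal_mul, hG t]
      rw [← h3, h5]
      ring
    have h5 := congrArg (Polynomial.eval α) hPI
    simp only [Polynomial.eval_mul, Polynomial.eval_pow, Polynomial.eval_X, gpoly,
      Polynomial.eval_sub, Polynomial.eval_one, Polynomial.eval_C] at h5
    rw [sub_self, zero_mul, mul_zero] at h5
    have h6 : u.eval α * v.eval α = 0 := by
      rcases mul_eq_zero.mp h5.symm with h' | h'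
      · exact absurd h' hα
      · exact h'
    rcases mul_eq_zero.mp h6 with h' | h'
    · exact Or.inr (unit_cofactor hα habs hrepu hrepv hG h')
    · refine Or.inl (unit_cofactor hα habs hrepv hrepu (fun t => ?_) h')
      rw [hG t, mul_comm]

end TrigAux

namespace TrigAux
open Complex Polynomial

lemma part3 (A B P Q : TrigPolyRing)
    (hP0 : ∀ t : ℝ, (P : ℝ → ℝ) t ≠ 0) :
    (∀ c : ℝ, c ≠ 0 → (∀ t : ℝ, (Q : ℝ → ℝ) t = c) →
      ∀ K : ℝ → ℝ → ℝ, Continuous (Function.uncurry K) →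
        (∀ t x : ℝ,
          (deriv (Q : ℝ → ℝ) t - deriv (P : ℝ → ℝ) t * x) +
              ((A : ℝ → ℝ) t * x ^ 3 + (B : ℝ → ℝ) t * x ^ 2) * (-((P : ℝ → ℝ) t)) =
            K t x * ((Q : ℝ → ℝ) t - (P : ℝ → ℝ) t * x)) →
        ∀ t x : ℝ, K t x = (A : ℝ → ℝ) t * x ^ 2 - deriv (P : ℝ → ℝ) t / c * x) := by
  intro c hc hQc K hK hid t x
  have hdQ : deriv (Q : ℝ → ℝ) = fun _ => 0 := by
    have : (Q : ℝ → ℝ) = fun _ => c := funext hQc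
    rw [this]
    funext s
    simp
  -- constraint at x₀ = c / P t
  have hp := hP0 t
  set x₀ : ℝ := c / (P : ℝ → ℝ) t with hx₀
  have hPx₀ : (P : ℝ → ℝ) t * x₀ = c := by
    rw [hx₀]; field_simp
  have h0 := hid t x₀
  rw [hdQ, hQc t] at h0
  have hz : c - (P : ℝ → ℝ) t * x₀ = 0 := by rw [hPx₀]; ring
  rw [hz, mul_zero] at h0
  have hcon3 : deriv (P : ℝ → ℝ) t * c * (P : ℝ → ℝ) t + (A : ℝ → ℝ) t * c ^ 3
      + (B : ℝ → ℝ) t * c ^ 2 * (P : ℝ → ℝ) t = 0 := by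
    have cz : ℝ := 0
    linear_combination (-((P : ℝ → ℝ) t ^ 2)) * h0 +
      (deriv (P : ℝ → ℝ) t * (P : ℝ → ℝ) t +
        (A : ℝ → ℝ) t * (c ^ 2 + c * ((P : ℝ → ℝ) t * x₀) + ((P : ℝ → ℝ) t * x₀) ^ 2) +
        (B : ℝ → ℝ) t * (P : ℝ → ℝ) t * (c + (P : ℝ → ℝ) t * x₀)) * hz
  have hcon : (A : ℝ → ℝ) t * c ^ 2 + deriv (P : ℝ → ℝ) t * (P : ℝ → ℝ) t
      + (B : ℝ → ℝ) t * c * (P : ℝ → ℝ) t = 0 := by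
    apply mul_left_cancel₀ hc
    rw [mul_zero]
    linear_combination hcon3
  -- two continuous functions agreeing off a point
  have hcont1 : Continuous (fun y => K t y) := by
    have h1 : Continuous (fun y : ℝ => (t, y)) := by fun_prop
    exact hK.comp h1
  have hcont2 : Continuous (fun y : ℝ =>
      (A : ℝ → ℝ) t * y ^ 2 - deriv (P : ℝ → ℝ) t / c * y) := by fun_prop
  have hEq : Set.EqOn (fun y => K t y)
      (fun y : ℝ => (A : ℝ → ℝ) t * y ^ 2 - deriv (P : ℝ → ℝ) t / c * y) ({x₀}ᶜ) := by
    intro y hy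
    simp only [Set.mem_compl_iff, Set.mem_singleton_iff] at hy
    have hy' : c - (P : ℝ → ℝ) t * y ≠ 0 := by
      intro h'
      apply hy
      rw [hx₀]
      field_simp
      linarith [h']
    have h1 := hid t y
    rw [hdQ, hQc t] at h1
    have hdivform : ((A : ℝ → ℝ) t * y ^ 2 - deriv (P : ℝ → ℝ) t / c * y) *
          ((c - (P : ℝ → ℝ) t * y) * c)
        = ((A : ℝ → ℝ) t * y ^ 2 * c - deriv (P : ℝ → ℝ) t * y) * (c - (P : ℝ → ℝ) t * y) := by
      field_simp
    have e1 : K t y * ((c - (P : ℝ → ℝ) t * y) * c) =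
        ((A : ℝ → ℝ) t * y ^ 2 - deriv (P : ℝ → ℝ) t / c * y) *
          ((c - (P : ℝ → ℝ) t * y) * c) := by
      rw [hdivform]
      linear_combination (-c) * h1 + (-(y ^ 2)) * hcon
    exact mul_right_cancel₀ (mul_ne_zero hy' hc) e1
  have hfun := hcont1.ext_on (dense_compl_singleton x₀) hcont2 hEq
  exact congrFun hfun x

end TrigAux

namespace TrigAux
open Complex Polynomial

def IsInvariantCurve' (A B Q P : ℝ → ℝ) : Prop :=
  ∃ K : ℝ → ℝ → ℝ, Continuous (Function.uncurry K) ∧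
    ∀ t x : ℝ,
      (deriv Q t - deriv P t * x) + (A t * x ^ 3 + B t * x ^ 2) * (-(P t)) =
        K t x * (Q t - P t * x)

lemma easy_dir (A B P Q : TrigPolyRing) (c : ℝ) (hc : c ≠ 0)
    (hQc : ∀ t : ℝ, (Q : ℝ → ℝ) t = c) (R : TrigPolyRing)
    (hA : ∀ t : ℝ, (A : ℝ → ℝ) t = (P : ℝ → ℝ) t / c * (R : ℝ → ℝ) t)
    (hB : ∀ t : ℝ, (B : ℝ → ℝ) t = -(deriv (P : ℝ → ℝ) t) / c - (R : ℝ → ℝ) t) :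
    IsInvariantCurve' (A : ℝ → ℝ) (B : ℝ → ℝ) (Q : ℝ → ℝ) (P : ℝ → ℝ) := by
  have hcA : Continuous (A : ℝ → ℝ) := continuous_of_mem A.2
  have hcP' : Continuous (deriv (P : ℝ → ℝ)) := continuous_of_mem (deriv_mem P.2)
  refine ⟨fun t x => (A : ℝ → ℝ) t * x ^ 2 - deriv (P : ℝ → ℝ) t / c * x, ?_, ?_⟩
  · have : Function.uncurry (fun t x => (A : ℝ → ℝ) t * x ^ 2 -
        deriv (P : ℝ → ℝ) t / c * x) =
        fun p : ℝ × ℝ => (A : ℝ → ℝ) p.1 * p.2 ^ 2 - deriv (P : ℝ → ℝ) p.1 / c * p.2 := rfl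
    rw [this]
    fun_prop
  · intro t x
    have hdQ : deriv (Q : ℝ → ℝ) = fun _ => 0 := by
      have h1 : (Q : ℝ → ℝ) = fun _ => c := funext hQc
      rw [h1]; funext s; simp
    have hA' : (A : ℝ → ℝ) t * c = (P : ℝ → ℝ) t * (R : ℝ → ℝ) t := by
      rw [hA t]; field_simp
    rw [hdQ, hQc t, hA t, hB t]
    field_simp
    linear_combination (x ^ 3 * (P : ℝ → ℝ) t - x ^ 2 * c) * hA'

end TrigAux

namespace TrigAux
open Complex Polynomial

lemma forward_dir (A B P Q : TrigPolyRing)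
    (hP0 : ∀ t : ℝ, (P : ℝ → ℝ) t ≠ 0) (hQ0 : Q ≠ 0)
    (hcoprime : ¬ ∃ z : TrigPolyRing, Irreducible z ∧ z ∣ P ∧ z ∣ Q)
    (hinv : IsInvariantCurve' (A : ℝ → ℝ) (B : ℝ → ℝ) (Q : ℝ → ℝ) (P : ℝ → ℝ)) :
    ∃ c : ℝ, c ≠ 0 ∧ (∀ t : ℝ, (Q : ℝ → ℝ) t = c) ∧
      ∃ R : TrigPolyRing,
        (∀ t : ℝ, (A : ℝ → ℝ) t = (P : ℝ → ℝ) t / c * (R : ℝ → ℝ) t) ∧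
        (∀ t : ℝ, (B : ℝ → ℝ) t = -(deriv (P : ℝ → ℝ) t) / c - (R : ℝ → ℝ) t) := by
  classical
  obtain ⟨K, hK, hid⟩ := hinv
  set Sf : ℝ → ℝ := fun t => deriv (P : ℝ → ℝ) t * (P : ℝ → ℝ) t
      + (A : ℝ → ℝ) t * (Q : ℝ → ℝ) t ^ 2
      + (B : ℝ → ℝ) t * (Q : ℝ → ℝ) t * (P : ℝ → ℝ) t with hSf
  have hSmem : Sf ∈ TrigPolyRing := by
    have h1 : Sf = deriv (P : ℝ → ℝ) * (P : ℝ → ℝ)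
        + (A : ℝ → ℝ) * ((Q : ℝ → ℝ) * (Q : ℝ → ℝ))
        + (B : ℝ → ℝ) * (Q : ℝ → ℝ) * (P : ℝ → ℝ) := by
      funext t
      simp only [hSf, Pi.add_apply, Pi.mul_apply]
      ring
    rw [h1]
    exact add_mem (add_mem (mul_mem (deriv_mem P.2) P.2)
      (mul_mem A.2 (mul_mem Q.2 Q.2))) (mul_mem (mul_mem B.2 Q.2) P.2)
  have hstar : ∀ t, deriv (Q : ℝ → ℝ) t * (P : ℝ → ℝ) t ^ 2 = (Q : ℝ → ℝ) t * Sf t := by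
    intro t
    have hpt := hP0 t
    set x₀ : ℝ := (Q : ℝ → ℝ) t / (P : ℝ → ℝ) t with hx₀
    have hPx₀ : (P : ℝ → ℝ) t * x₀ = (Q : ℝ → ℝ) t := by rw [hx₀]; field_simp
    have h0 := hid t x₀
    have hz : (Q : ℝ → ℝ) t - (P : ℝ → ℝ) t * x₀ = 0 := by rw [hPx₀]; ring
    rw [hz, mul_zero] at h0
    simp only [hSf]
    linear_combination ((P : ℝ → ℝ) t ^ 2) * h0 -
      (deriv (P : ℝ → ℝ) t * (P : ℝ → ℝ) t +
        (A : ℝ → ℝ) t * (((P : ℝ → ℝ) t * x₀) ^ 2 + (P : ℝ → ℝ) t * x₀ * (Q : ℝ → ℝ) t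
          + (Q : ℝ → ℝ) t ^ 2) +
        (B : ℝ → ℝ) t * (P : ℝ → ℝ) t * ((P : ℝ → ℝ) t * x₀ + (Q : ℝ → ℝ) t)) * hz
  obtain ⟨ℓp, p, hp⟩ := repM_exists P.2
  obtain ⟨ℓq, q, hq⟩ := repM_exists Q.2
  obtain ⟨ℓs, s, hs⟩ := repM_exists hSmem
  have hQd : ∀ t, HasDerivAt (Q : ℝ → ℝ) (deriv (Q : ℝ → ℝ) t) t :=
    fun t => (differentiable_of_mem Q.2 t).hasDerivAt
  have hq' := repM_deriv hq hQd
  set qt : ℂ[X] := Polynomial.C Complex.I *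
    (Polynomial.X * q.derivative - Polynomial.C (ℓq : ℂ) * q) with hqt
  have hPI : Polynomial.X ^ ℓs * (qt * p ^ 2) = Polynomial.X ^ (2 * ℓp) * (q * s) := by
    apply poly_eq_of_circle
    intro t
    have h1 := hp t
    have h2 := hq t
    have h3 := hs t
    have h4 := hq' t
    have h5 := congrArg (fun y : ℝ => (y : ℂ)) (hstar t)
    push_cast at h5
    simp only [Polynomial.eval_mul, Polynomial.eval_pow, Polynomial.eval_X]
    rw [← h1, ← h2, ← h3, ← h4]
    linear_combination (E t ^ (ℓs + ℓq + 2 * ℓp)) * h5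
  have hQne : ∃ t, (Q : ℝ → ℝ) t ≠ 0 := by
    by_contra h
    push_neg at h
    exact hQ0 (Subtype.ext (funext h))
  have hq0 : q ≠ 0 := rep_ne_zero hq hQne
  obtain ⟨q₀, hq₀fact, hq₀X⟩ := q.exists_eq_pow_rootMultiplicity_mul_and_not_dvd hq0 0
  set b := q.rootMultiplicity 0 with hb
  rw [Polynomial.C_0, sub_zero] at hq₀fact hq₀X
  have hq₀0 : q₀.coeff 0 ≠ 0 := fun h => hq₀X (Polynomial.X_dvd_iff.mpr h)
  have hq₀ne : q₀ ≠ 0 := by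
    intro h
    apply hq₀0
    rw [h]
    simp
  have hcop : IsCoprime q₀ p := by
    by_contra hncop
    have hgu : ¬IsUnit (EuclideanDomain.gcd q₀ p) :=
      fun h => hncop (EuclideanDomain.gcd_isUnit_iff.mp h)
    have hdeg : (EuclideanDomain.gcd q₀ p).degree ≠ 0 :=
      fun h => hgu (Polynomial.isUnit_iff_degree_eq_zero.mpr h)
    obtain ⟨α, hαroot⟩ := IsAlgClosed.exists_root _ hdeg
    have hαq₀ : q₀.eval α = 0 := by
      obtain ⟨e, he⟩ := EuclideanDomain.gcd_dvd_left q₀ p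
      rw [he, Polynomial.eval_mul, hαroot, zero_mul]
    have hαp : p.eval α = 0 := by
      obtain ⟨e, he⟩ := EuclideanDomain.gcd_dvd_right q₀ p
      rw [he, Polynomial.eval_mul, hαroot, zero_mul]
    have hα0 : α ≠ 0 := by
      rintro rfl
      rw [← Polynomial.coeff_zero_eq_eval_zero] at hαq₀
      exact hq₀0 hαq₀
    have habs : ‖α‖ ≠ 1 := by
      intro h1
      have hEα : E (Complex.arg α) = α := by
        have h2 := Complex.norm_mul_exp_arg_mul_I α
        rw [h1] at h2
        simpa [E] using h2
      have h3 := hp (Complex.arg α)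
      rw [hEα, hαp] at h3
      rcases mul_eq_zero.mp h3 with h' | h'
      · exact hP0 _ (by exact_mod_cast h')
      · exact hα0 ((pow_eq_zero_iff').mp h').1
    have hαq : q.eval α = 0 := by
      rw [hq₀fact, Polynomial.eval_mul, hαq₀, mul_zero]
    exact hcoprime ⟨Gelem α, Gelem_irreducible hα0 habs,
      dvd_of_root hp hα0 habs hαp, dvd_of_root hq hα0 habs hαq⟩
  set r : ℂ[X] := Polynomial.X * q₀.derivative
      + Polynomial.C ((b : ℂ) - (ℓq : ℂ)) * q₀ with hrdef
  have hXder : Polynomial.X * Polynomial.derivative (Polynomial.X ^ b * q₀)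
      = Polynomial.X ^ b * (Polynomial.C (b : ℂ) * q₀ + Polynomial.X * q₀.derivative) := by
    cases b with
    | zero => simp
    | succ n =>
        rw [Polynomial.derivative_mul, Polynomial.derivative_X_pow, Nat.succ_sub_one]
        push_cast
        ring
  have hqt_fact : qt = Polynomial.X ^ b * (Polynomial.C Complex.I * r) := by
    rw [hqt, hrdef, hq₀fact]
    simp only [map_sub]
    linear_combination Polynomial.C Complex.I * hXder
  have hdvd0 : q₀ ∣ (Polynomial.X ^ ℓs * (Polynomial.X ^ b * Polynomial.C Complex.I * p ^ 2)) * r := by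
    have h1 : (Polynomial.X ^ ℓs * (Polynomial.X ^ b * Polynomial.C Complex.I * p ^ 2)) * r
        = Polynomial.X ^ ℓs * (qt * p ^ 2) := by
      rw [hqt_fact]; ring
    rw [h1, hPI, hq₀fact]
    exact ⟨Polynomial.X ^ (2 * ℓp) * Polynomial.X ^ b * s, by ring⟩
  have hcopX : IsCoprime q₀ (Polynomial.X : ℂ[X]) :=
    ((Polynomial.irreducible_X.coprime_iff_not_dvd).mpr hq₀X).symm
  have hcopI : IsCoprime q₀ (Polynomial.C Complex.I) := by
    refine ⟨0, Polynomial.C (-Complex.I), ?_⟩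
    rw [zero_mul, zero_add, ← Polynomial.C_mul]
    norm_num [Complex.I_mul_I]
  have hq₀r : q₀ ∣ r := by
    have h1 : IsCoprime q₀ (Polynomial.X ^ ℓs * (Polynomial.X ^ b * Polynomial.C Complex.I * p ^ 2)) :=
      (hcopX.pow_right).mul_right (((hcopX.pow_right).mul_right hcopI).mul_right (hcop.pow_right))
    exact h1.dvd_of_dvd_mul_left hdvd0
  have hq₀C : q₀ = Polynomial.C (q₀.coeff 0) := by
    by_cases hdeg : q₀.natDegree = 0
    · exact Polynomial.eq_C_of_natDegree_eq_zero hdeg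
    · exfalso
      obtain ⟨w, hw⟩ := hq₀r
      have hderiv_deg : q₀.derivative.natDegree < q₀.natDegree :=
        Polynomial.natDegree_derivative_lt hdeg
      have hrdeg : r.natDegree ≤ q₀.natDegree := by
        rw [hrdef]
        apply le_trans (Polynomial.natDegree_add_le _ _)
        apply max_le
        · apply le_trans (Polynomial.natDegree_mul_le)
          rw [Polynomial.natDegree_X]
          omega
        · exact le_trans (Polynomial.natDegree_C_mul_le _ _) le_rfl
      have hwC : ∃ μ : ℂ, r = Polynomial.C μ * q₀ := by
        by_cases hr0 : r = 0
        · exact ⟨0, by simp [hr0]⟩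
        · have hw0 : w ≠ 0 := by
            rintro rfl
            rw [mul_zero] at hw
            exact hr0 hw
          have hmul := Polynomial.natDegree_mul hq₀ne hw0
          rw [hw] at hrdeg
          rw [hmul] at hrdeg
          have hwdeg : w.natDegree = 0 := by omega
          have hwc := Polynomial.eq_C_of_natDegree_eq_zero hwdeg
          refine ⟨w.coeff 0, ?_⟩
          rw [hw]
          conv_lhs => rw [hwc]
          ring
      obtain ⟨μ, hμ⟩ := hwC
      have h9 : Polynomial.X * q₀.derivative + Polynomial.C ((b : ℂ) - (ℓq : ℂ)) * q₀
          = Polynomial.C μ * q₀ := hrdef ▸ hμ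
      simp only [map_sub] at h9
      have hXq : Polynomial.X * q₀.derivative
          = Polynomial.C (μ - ((b : ℂ) - (ℓq : ℂ))) * q₀ := by
        simp only [map_sub]
        linear_combination h9
      have hc0 : (Polynomial.X * q₀.derivative).coeff 0 = 0 := by
        simp [Polynomial.mul_coeff_zero]
      have hμ0 : μ - ((b : ℂ) - (ℓq : ℂ)) = 0 := by
        have h10 := congrArg (fun f : ℂ[X] => f.coeff 0) hXq
        simp only [hc0, Polynomial.coeff_C_mul] at h10
        rcases mul_eq_zero.mp h10.symm with h' | h'
        · exact h'
        · exact absurd h' hq₀0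
      rw [hμ0, Polynomial.C_0, zero_mul] at hXq
      have hqd0 : q₀.derivative = 0 := by
        rcases mul_eq_zero.mp hXq with h' | h'
        · exact absurd h' Polynomial.X_ne_zero
        · exact h'
      exact hdeg (Polynomial.natDegree_eq_zero_of_derivative_eq_zero hqd0)
  set c₀ := q₀.coeff 0 with hc₀
  have hqC : q = Polynomial.C c₀ * Polynomial.X ^ b := by
    rw [hq₀fact]
    nth_rewrite 1 [hq₀C]
    ring
  rw [hqC] at hq
  obtain ⟨him, hconst⟩ := rep_monomial_const hq hq₀0
  set c := c₀.re with hcdef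
  have hcne : c ≠ 0 := by
    intro h
    apply hq₀0
    apply Complex.ext
    · rw [← hcdef]; exact h
    · exact him
  refine ⟨c, hcne, hconst, ?_⟩
  have hdQ : deriv (Q : ℝ → ℝ) = fun _ => 0 := by
    rw [funext hconst]
    funext u
    simp
  have hS0 : ∀ t, Sf t = 0 := by
    intro t
    have h1 := hstar t
    rw [hdQ] at h1
    simp only at h1
    rw [hconst t] at h1
    rw [zero_mul] at h1
    rcases mul_eq_zero.mp h1.symm with h' | h'
    · exact absurd h' hcne
    · exact h'
  set Pd : TrigPolyRing := ⟨deriv (P : ℝ → ℝ), deriv_mem P.2⟩ with hPd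
  refine ⟨(-(1/c)) • (c • B + Pd), ?_, ?_⟩
  · intro t
    have hR : (((-(1/c)) • (c • B + Pd) : TrigPolyRing) : ℝ → ℝ) t
        = (-(1/c)) * (c * (B : ℝ → ℝ) t + deriv (P : ℝ → ℝ) t) := rfl
    rw [hR]
    have h1 := hS0 t
    simp only [hSf] at h1
    rw [hconst t] at h1
    have hpt := hP0 t
    field_simp
    linear_combination h1
  · intro t
    have hR : (((-(1/c)) • (c • B + Pd) : TrigPolyRing) : ℝ → ℝ) t
        = (-(1/c)) * (c * (B : ℝ → ℝ) t + deriv (P : ℝ → ℝ) t) := rfl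
    rw [hR]
    field_simp
    ring

end TrigAux

/-- Characterization of invariant curves `Q(t) - P(t)x = 0` of the Abel equation
`x' = A x³ + B x²` (with `P` nonvanishing, `Q ≠ 0`, and `P, Q` without common
irreducible factors): they occur exactly when `Q = c ≠ 0` is constant and
`A = (P/c)R`, `B = -P'/c - R` for some trigonometric polynomial `R`; moreover
the cofactor is then `A x² - (P'/c) x`. -/
theorem invariant_curve_characterization
    (A B P Q : TrigPolyRing)
    (hP0 : ∀ t : ℝ, (P : ℝ → ℝ) t ≠ 0) (hQ0 : Q ≠ 0)
    (hcoprime : ¬ ∃ z : TrigPolyRing, Irreducible z ∧ z ∣ P ∧ z ∣ Q) :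
    (IsInvariantCurve (A : ℝ → ℝ) (B : ℝ → ℝ) (Q : ℝ → ℝ) (P : ℝ → ℝ) ↔
      ∃ c : ℝ, c ≠ 0 ∧ (∀ t : ℝ, (Q : ℝ → ℝ) t = c) ∧
        ∃ R : TrigPolyRing,
          (∀ t : ℝ, (A : ℝ → ℝ) t = (P : ℝ → ℝ) t / c * (R : ℝ → ℝ) t) ∧
          (∀ t : ℝ, (B : ℝ → ℝ) t = -(deriv (P : ℝ → ℝ) t) / c - (R : ℝ → ℝ) t)) ∧
    (∀ c : ℝ, c ≠ 0 → (∀ t : ℝ, (Q : ℝ → ℝ) t = c) →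
      ∀ K : ℝ → ℝ → ℝ, Continuous (Function.uncurry K) →
        (∀ t x : ℝ,
          (deriv (Q : ℝ → ℝ) t - deriv (P : ℝ → ℝ) t * x) +
              ((A : ℝ → ℝ) t * x ^ 3 + (B : ℝ → ℝ) t * x ^ 2) * (-((P : ℝ → ℝ) t)) =
            K t x * ((Q : ℝ → ℝ) t - (P : ℝ → ℝ) t * x)) →
        ∀ t x : ℝ, K t x = (A : ℝ → ℝ) t * x ^ 2 - deriv (P : ℝ → ℝ) t / c * x) := by
  constructor
  · constructor
    · intro hinv
      exact TrigAux.forward_dir A B P Q hP0 hQ0 hcoprime hinv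
    · rintro ⟨c, hc, hQc, R, hA, hB⟩
      exact TrigAux.easy_dir A B P Q c hc hQc R hA hB
  · exact TrigAux.part3 A B P Q hP0
end
end

section
/- Let A, B be real trigonometric polynomials with A not identically zero. If deg(A) is odd, or if deg(B) > deg(A)/2, then the Abel equation x' = A(t)x^3 + B(t)x^2 has at most two pairwise distinct non-trivial invariant curves 1 − P(t)x = 0 with P a non-constant real trigonometric polynomial nonvanishing on ℝ. -/
open Real Set

noncomputable section

/-- A real trigonometric polynomial. -/
def IsTrigPoly (P : ℝ → ℝ) : Prop :=
  ∃ (n : ℕ) (a b : ℕ → ℝ), ∀ t : ℝ,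
    P t = ∑ k ∈ Finset.range (n + 1), (a k * Real.cos (k * t) + b k * Real.sin (k * t))

/-- The degree of a trigonometric polynomial: the least `n` such that `P` admits a
representation with harmonics only up to order `n`. -/
def trigDegree (P : ℝ → ℝ) : ℕ :=
  sInf {n : ℕ | ∃ a b : ℕ → ℝ, ∀ t : ℝ,
    P t = ∑ k ∈ Finset.range (n + 1), (a k * Real.cos (k * t) + b k * Real.sin (k * t))}

/-- The curve `1 - P(t)x = 0` is an invariant curve of the Abel equation
`x' = A(t)x³ + B(t)x²`. -/
def IsInvariantCurveOne (A B P : ℝ → ℝ) : Prop :=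
  ∃ K : ℝ → ℝ → ℝ, Continuous (Function.uncurry K) ∧
    ∀ t x : ℝ,
      (-(deriv P t) * x) + (A t * x ^ 3 + B t * x ^ 2) * (-(P t)) =
        K t x * (1 - P t * x)

section AuxiliaryLemmas
open Complex



/-- complex exponential harmonic -/
def ee (k : ℤ) (t : ℝ) : ℂ := Complex.exp (k * t * Complex.I)

lemma ee_mul (k l : ℤ) (t : ℝ) : ee k t * ee l t = ee (k + l) t := by
  rw [ee, ee, ee, ← Complex.exp_add]
  congr 1
  push_cast
  ring

lemma ee_zero (t : ℝ) : ee 0 t = 1 := by simp [ee]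

lemma ee_eq (k : ℤ) (t : ℝ) :
    ee k t = (Real.cos ((k : ℝ) * t) : ℂ) + (Real.sin ((k : ℝ) * t) : ℂ) * Complex.I := by
  rw [ee]
  have : (k : ℂ) * (t : ℂ) = (((k : ℝ) * t : ℝ) : ℂ) := by push_cast; ring
  rw [this, Complex.exp_mul_I, Complex.ofReal_cos, Complex.ofReal_sin]

lemma conj_ee (k : ℤ) (t : ℝ) : (starRingEnd ℂ) (ee k t) = ee (-k) t := by
  rw [ee, ee, ← Complex.exp_conj]
  congr 1
  simp only [map_mul, Complex.conj_I, Complex.conj_ofReal, map_intCast]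
  push_cast
  ring

lemma ee_pow (n : ℕ) (t : ℝ) : ee 1 t ^ n = ee n t := by
  rw [ee, ee, ← Complex.exp_nat_mul]
  congr 1
  push_cast
  ring

/-- linear independence of the harmonics -/
lemma ee_linindep (s : Finset ℤ) (c : ℤ → ℂ)
    (h : ∀ t : ℝ, ∑ k ∈ s, c k * ee k t = 0) : ∀ k ∈ s, c k = 0 := by
  set M : ℕ := s.sup Int.natAbs with hM
  have hmem : ∀ k ∈ s, 0 ≤ k + M := by
    intro k hk
    have := Finset.le_sup (f := Int.natAbs) hk
    omega
  set p : Polynomial ℂ := ∑ k ∈ s, Polynomial.C (c k) * Polynomial.X ^ (k + M).toNat with hp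
  have hroot : ∀ t : ℝ, p.IsRoot (ee 1 t) := by
    intro t
    have he : ∀ k ∈ s, (ee 1 t) ^ (k + M).toNat = ee (k + M) t := by
      intro k hk
      rw [ee_pow]
      congr 1
      exact Int.toNat_of_nonneg (hmem k hk)
    have : p.eval (ee 1 t) = ee M t * ∑ k ∈ s, c k * ee k t := by
      rw [hp, Polynomial.eval_finset_sum, Finset.mul_sum]
      refine Finset.sum_congr rfl fun k hk => ?_
      rw [Polynomial.eval_mul, Polynomial.eval_C, Polynomial.eval_pow, Polynomial.eval_X,
        he k hk, ← ee_mul]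
      ring
    rw [Polynomial.IsRoot, this, h t, mul_zero]
  have hpz : p = 0 := by
    apply Polynomial.eq_zero_of_infinite_isRoot
    have hinj : Set.InjOn (fun t : ℝ => ee 1 t) (Set.Ioo 0 1) := by
      intro x hx y hy hxy
      simp only [ee] at hxy
      rw [Complex.exp_eq_exp_iff_exists_int] at hxy
      obtain ⟨n, hn⟩ := hxy
      have hxr : x = y + n * (2 * Real.pi) := by
        have := congrArg Complex.im hn
        simp [Complex.add_im, Complex.mul_im, Complex.mul_re] at this
        exact this
      have hpi := Real.pi_gt_three
      simp only [Set.mem_Ioo] at hx hy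
      have hn0 : n = 0 := by
        rcases lt_trichotomy n 0 with h | h | h
        · have h2 : n ≤ -1 := by omega
          have h1 : (n : ℝ) ≤ -1 := by exact_mod_cast h2
          nlinarith
        · exact h
        · have h2 : 1 ≤ n := by omega
          have h1 : (1 : ℝ) ≤ n := by exact_mod_cast h2
          nlinarith
      rw [hn0] at hxr
      simpa using hxr
    have hsub : (fun t : ℝ => ee 1 t) '' (Set.Ioo 0 1) ⊆ {x | p.IsRoot x} := by
      rintro _ ⟨t, _, rfl⟩
      exact hroot t
    exact Set.Infinite.mono hsub ((Set.Ioo_infinite (by norm_num)).image hinj)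
  intro k hk
  have hcoeff : p.coeff (k + M).toNat = c k := by
    rw [hp, Polynomial.finset_sum_coeff]
    rw [Finset.sum_eq_single_of_mem k hk]
    · simp [Polynomial.coeff_C_mul, Polynomial.coeff_X_pow]
    · intro l hl hlk
      have h1 := hmem l hl
      have h2 := hmem k hk
      simp only [Polynomial.coeff_C_mul, Polynomial.coeff_X_pow]
      rw [if_neg (by omega), mul_zero]
  rw [hpz] at hcoeff
  simpa using hcoeff.symm

/-- pairing lemma for symmetric sums -/
lemma sum_Icc_pair (n : ℕ) (g : ℤ → ℂ) :
    ∑ k ∈ Finset.Icc (-(n : ℤ)) n, g k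
      = g 0 + ∑ k ∈ Finset.range n, (g (k + 1) + g (-(k + 1))) := by
  induction n with
  | zero => simp
  | succ n ih =>
    have hset : Finset.Icc (-(n + 1 : ℤ)) (n + 1 : ℤ)
        = insert ((n : ℤ) + 1) (insert (-((n : ℤ) + 1)) (Finset.Icc (-(n : ℤ)) n)) := by
      ext k
      simp only [Finset.mem_Icc, Finset.mem_insert]
      omega
    have h1 : ((n : ℤ) + 1) ∉ insert (-((n : ℤ) + 1)) (Finset.Icc (-(n : ℤ)) n) := by
      simp only [Finset.mem_insert, Finset.mem_Icc]
      omega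
    have h2 : (-((n : ℤ) + 1)) ∉ Finset.Icc (-(n : ℤ)) n := by
      simp only [Finset.mem_Icc]
      omega
    have : (-(↑(n+1) : ℤ)) = -((n : ℤ) + 1) := by push_cast; ring
    rw [show ((↑(n+1) : ℤ)) = ((n : ℤ) + 1) by push_cast; ring, hset,
      Finset.sum_insert h1, Finset.sum_insert h2, ih, Finset.sum_range_succ]
    push_cast
    ring
/-- the set of admissible representation orders -/
def trigSet (P : ℝ → ℝ) : Set ℕ :=
  {n : ℕ | ∃ a b : ℕ → ℝ, ∀ t : ℝ,
    P t = ∑ k ∈ Finset.range (n + 1), (a k * Real.cos (k * t) + b k * Real.sin (k * t))}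

/-- complex exponential representation with conjugate symmetry and support control -/
def ZRep (f : ℝ → ℝ) (n : ℕ) (c : ℤ → ℂ) : Prop :=
  (∀ k : ℤ, c (-k) = (starRingEnd ℂ) (c k)) ∧
  (∀ k : ℤ, n < k.natAbs → c k = 0) ∧
  (∀ t : ℝ, (f t : ℂ) = ∑ k ∈ Finset.Icc (-(n : ℤ)) n, c k * ee k t)

lemma ZRep.mono {f : ℝ → ℝ} {n m : ℕ} {c : ℤ → ℂ} (h : ZRep f n c) (hnm : n ≤ m) :
    ZRep f m c := by
  obtain ⟨h1, h2, h3⟩ := h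
  refine ⟨h1, fun k hk => h2 k (by omega), fun t => ?_⟩
  rw [h3 t]
  apply Finset.sum_subset
  · intro k hk
    simp only [Finset.mem_Icc] at *
    omega
  · intro k hk hk'
    simp only [Finset.mem_Icc] at hk hk'
    rw [h2 k (by omega), zero_mul]

/-- trigSet membership gives a ZRep -/
lemma trigSet_to_zrep {f : ℝ → ℝ} {n : ℕ} (h : n ∈ trigSet f) : ∃ c, ZRep f n c := by
  obtain ⟨a, b, hab⟩ := h
  set a' : ℕ → ℝ := fun j => if j ≤ n then a j else 0 with ha'
  set b' : ℕ → ℝ := fun j => if j ≤ n then b j else 0 with hb'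
  set c : ℤ → ℂ := fun k =>
    if 0 < k then ((a' k.natAbs : ℂ) - (b' k.natAbs : ℂ) * Complex.I) / 2
    else if k < 0 then ((a' k.natAbs : ℂ) + (b' k.natAbs : ℂ) * Complex.I) / 2
    else (a' 0 : ℂ) with hc
  refine ⟨c, ?_, ?_, ?_⟩
  · intro k
    rcases lt_trichotomy k 0 with h | h | h
    · have h1 : 0 < -k := by omega
      simp only [hc, if_pos h1, if_neg (by omega : ¬ 0 < k), if_pos h, Int.natAbs_neg]
      simp only [map_div₀, map_add, map_sub, map_mul, Complex.conj_ofReal, Complex.conj_I,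
        map_ofNat]
      ring
    · subst h
      simp only [hc, neg_zero, if_neg (lt_irrefl 0)]
      simp [Complex.conj_ofReal]
    · have h1 : -k < 0 := by omega
      simp only [hc, if_neg (by omega : ¬ 0 < -k), if_pos h1, if_pos h, Int.natAbs_neg]
      simp only [map_div₀, map_add, map_sub, map_mul, Complex.conj_ofReal, Complex.conj_I,
        map_ofNat]
      ring
  · intro k hk
    have ha0 : a' k.natAbs = 0 := by simp only [ha']; rw [if_neg (by omega)]
    have hb0 : b' k.natAbs = 0 := by simp only [hb']; rw [if_neg (by omega)]
    rcases lt_trichotomy k 0 with h | h | h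
    · simp [hc, if_neg (by omega : ¬ 0 < k), if_pos h, ha0, hb0]
    · omega
    · simp [hc, if_pos h, ha0, hb0]
  · intro t
    rw [sum_Icc_pair n (fun k => c k * ee k t)]
    have hab' : f t = ∑ k ∈ Finset.range (n + 1),
        (a' k * Real.cos (k * t) + b' k * Real.sin (k * t)) := by
      rw [hab t]
      refine Finset.sum_congr rfl fun j hj => ?_
      simp only [Finset.mem_range] at hj
      simp only [ha', hb']
      rw [if_pos (by omega), if_pos (by omega)]
    rw [hab', Finset.sum_range_succ' (fun k =>
      (a' k * Real.cos (k * t) + b' k * Real.sin (k * t))) n]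
    push_cast
    rw [add_comm]
    congr 1
    · -- constant term
      simp only [hc, if_neg (lt_irrefl (0 : ℤ)), if_neg (by norm_num : ¬ (0:ℤ) < 0)]
      simp [ee_zero]
    · -- harmonics
      refine Finset.sum_congr rfl fun k _ => ?_
      have hj1 : (0 : ℤ) < (k : ℤ) + 1 := by omega
      have hj2 : (-((k : ℤ) + 1)) < 0 := by omega
      have hna : ((k : ℤ) + 1).natAbs = k + 1 := by omega
      have hnb : (-((k : ℤ) + 1)).natAbs = k + 1 := by omega
      simp only [hc, if_pos hj1, if_neg (by omega : ¬ (0:ℤ) < -((k:ℤ)+1)), if_pos hj2,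
        if_neg (by omega : ¬ ((k:ℤ)+1) < 0), hna, hnb]
      rw [ee_eq, ee_eq]
      push_cast
      rw [show (-((k:ℂ)+1) * (t:ℂ)) = -(((k:ℂ)+1) * t) by ring, Complex.cos_neg,
        Complex.sin_neg]
      ring_nf
      rw [Complex.I_sq]
      ring

/-- ZRep gives trigSet membership -/
lemma zrep_to_trigSet {f : ℝ → ℝ} {n : ℕ} {c : ℤ → ℂ} (h : ZRep f n c) : n ∈ trigSet f := by
  obtain ⟨hsym, hsupp, hsum⟩ := h
  refine ⟨fun k => if k = 0 then (c 0).re else 2 * (c (k : ℤ)).re,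
    fun k => -2 * (c (k : ℤ)).im, fun t => ?_⟩
  have hc0 : ((c 0).re : ℂ) = c 0 := by
    rw [← Complex.conj_eq_iff_re]
    have := hsym 0
    simpa using this.symm
  have key : ((∑ k ∈ Finset.range (n + 1),
      ((if k = 0 then (c 0).re else 2 * (c (k : ℤ)).re) * Real.cos (k * t) +
        (-2 * (c (k : ℤ)).im) * Real.sin (k * t)) : ℝ) : ℂ) = (f t : ℂ) := by
    rw [hsum t, sum_Icc_pair n (fun k => c k * ee k t)]
    rw [Finset.sum_range_succ' (fun k =>
      ((if k = 0 then (c 0).re else 2 * (c (k : ℤ)).re) * Real.cos (k * t) +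
        (-2 * (c (k : ℤ)).im) * Real.sin (k * t))) n]
    push_cast
    rw [add_comm]
    congr 1
    · -- constant
      rw [ee_zero]
      norm_num [hc0]
    · refine Finset.sum_congr rfl fun k _ => ?_
      have hsymk := hsym ((k : ℤ) + 1)
      rw [show (-((k:ℤ) + 1) : ℤ) = -((k:ℤ)+1) by ring] at hsymk
      rw [hsymk, ee_eq, ee_eq]
      push_cast
      rw [show (-((k:ℂ)+1) * (t:ℂ)) = -(((k:ℂ)+1) * t) by ring, Complex.cos_neg,
        Complex.sin_neg]
      set zr := (c ((k:ℤ) + 1)).re with hzr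
      set zi := (c ((k:ℤ) + 1)).im with hzi
      have hz : c ((k:ℤ) + 1) = (zr : ℂ) + (zi : ℂ) * Complex.I := by
        rw [hzr, hzi]; exact (Complex.re_add_im _).symm
      rw [hz]
      simp only [map_add, map_mul, Complex.conj_ofReal, Complex.conj_I]
      ring_nf
      rw [Complex.I_sq]
      ring
  have := key
  exact_mod_cast this.symm
/-- uniqueness of ZRep coefficients -/
lemma zrep_unique {f : ℝ → ℝ} {n m : ℕ} {c d : ℤ → ℂ}
    (hc : ZRep f n c) (hd : ZRep f m d) : ∀ k, c k = d k := by
  set N := max n m with hN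
  have hc' := hc.mono (le_max_left n m)
  have hd' := hd.mono (le_max_right n m)
  have hz : ∀ t : ℝ, ∑ k ∈ Finset.Icc (-(N : ℤ)) N, (c k - d k) * ee k t = 0 := by
    intro t
    have := (hc'.2.2 t).symm.trans (hd'.2.2 t)
    rw [← sub_eq_zero] at this
    rw [← this, ← Finset.sum_sub_distrib]
    refine Finset.sum_congr rfl fun k _ => ?_
    ring
  have key := ee_linindep _ _ hz
  intro k
  by_cases hk : k ∈ Finset.Icc (-(N : ℤ)) N
  · have := key k hk
    linear_combination this
  · simp only [Finset.mem_Icc] at hk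
    rw [hc'.2.1 k (by omega), hd'.2.1 k (by omega)]

/-- a ZRep at the trig degree has nonzero top coefficient (positive degree case) -/
lemma top_coeff_ne_zero_pos {f : ℝ → ℝ} {c : ℤ → ℂ}
    (hf : ZRep f (trigDegree f) c) (h1 : 1 ≤ trigDegree f) : c (trigDegree f) ≠ 0 := by
  intro hc0
  set n := trigDegree f with hn
  have hcneg : c (-(n : ℤ)) = 0 := by rw [hf.1, hc0, map_zero]
  have hrep : ZRep f (n - 1) c := by
    refine ⟨hf.1, fun k hk => ?_, fun t => ?_⟩
    · rcases Nat.lt_or_ge n k.natAbs with h | h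
      · exact hf.2.1 k h
      · have : k.natAbs = n := by omega
        rcases Int.natAbs_eq k with he | he
        · rw [he, this]; exact hc0
        · rw [he, this]; exact hcneg
    · rw [hf.2.2 t]
      symm
      apply Finset.sum_subset
      · intro k hk
        simp only [Finset.mem_Icc] at *
        omega
      · intro k hk hk'
        simp only [Finset.mem_Icc] at hk hk'
        have h : k.natAbs = n := by omega
        rcases Int.natAbs_eq k with he | he
        · rw [he, h, hc0, zero_mul]
        · rw [he, h, hcneg, zero_mul]
  have : trigDegree f ≤ n - 1 := Nat.sInf_le (zrep_to_trigSet hrep)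
  omega

/-- degree-zero representations are constants -/
lemma zrep_zero_const {f : ℝ → ℝ} {c : ℤ → ℂ} (hf : ZRep f 0 c) :
    ∀ t, f t = (c 0).re := by
  intro t
  have := hf.2.2 t
  simp only [Nat.cast_zero, neg_zero, Finset.Icc_self, Finset.sum_singleton, ee_zero,
    mul_one] at this
  have : (f t : ℂ) = c 0 := this
  rw [← this]
  simp

/-- subtraction of representations -/
lemma zrep_sub {f g : ℝ → ℝ} {n : ℕ} {c d : ℤ → ℂ} (hf : ZRep f n c) (hg : ZRep g n d) :
    ZRep (fun t => f t - g t) n (fun k => c k - d k) := by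
  refine ⟨fun k => ?_, fun k hk => ?_, fun t => ?_⟩
  · show c (-k) - d (-k) = _
    rw [hf.1, hg.1, map_sub]
  · show c k - d k = 0
    rw [hf.2.1 k hk, hg.2.1 k hk, sub_zero]
  · push_cast
    rw [hf.2.2 t, hg.2.2 t, ← Finset.sum_sub_distrib]
    refine Finset.sum_congr rfl fun k _ => ?_
    ring

/-- convolution coefficients -/
def convC (n : ℕ) (c d : ℤ → ℂ) : ℤ → ℂ := fun j => ∑ k ∈ Finset.Icc (-(n : ℤ)) n, c k * d (j - k)

/-- multiplication of representations -/
lemma zrep_mul {f g : ℝ → ℝ} {n m : ℕ} {c d : ℤ → ℂ} (hf : ZRep f n c) (hg : ZRep g m d) :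
    ZRep (fun t => f t * g t) (n + m) (convC n c d) := by
  obtain ⟨hcs, hcsupp, hcsum⟩ := hf
  obtain ⟨hds, hdsupp, hdsum⟩ := hg
  refine ⟨fun j => ?_, fun j hj => ?_, fun t => ?_⟩
  · -- symmetry
    rw [convC, convC]
    have step1 : ∑ k ∈ Finset.Icc (-(n:ℤ)) n, c k * d (-j - k)
        = ∑ k ∈ Finset.Icc (-(n:ℤ)) n, c (-k) * d (-j + k) := by
      refine Finset.sum_nbij' (fun k => -k) (fun k => -k) ?_ ?_ ?_ ?_ ?_
      · intro k hk; simp only [Finset.mem_Icc] at *; omega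
      · intro k hk; simp only [Finset.mem_Icc] at *; omega
      · intro k _; ring
      · intro k _; ring
      · intro k _
        rw [neg_neg, sub_eq_add_neg]
    rw [step1, map_sum]
    refine Finset.sum_congr rfl fun k _ => ?_
    rw [map_mul, ← hcs k, ← hds (j - k)]
    congr 2
    ring
  · -- support
    rw [convC]
    apply Finset.sum_eq_zero
    intro k hk
    simp only [Finset.mem_Icc] at hk
    rw [hdsupp (j - k) (by omega), mul_zero]
  · -- the sum
    push_cast
    rw [hcsum t, hdsum t, Finset.sum_mul_sum]
    have inner : ∀ k ∈ Finset.Icc (-(n:ℤ)) n,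
        ∑ l ∈ Finset.Icc (-(m:ℤ)) m, c k * ee k t * (d l * ee l t)
          = ∑ j ∈ Finset.Icc (-((n:ℤ)+m)) ((n:ℤ)+m), c k * d (j - k) * ee j t := by
      intro k hk
      simp only [Finset.mem_Icc] at hk
      have hzero : ∀ j ∈ Finset.Icc (-((n:ℤ)+m)) ((n:ℤ)+m),
          j ∉ Finset.Icc (k - m) (k + m) → c k * d (j - k) * ee j t = 0 := by
        intro j hj hj'
        simp only [Finset.mem_Icc] at hj hj'
        rw [hdsupp (j - k) (by omega), mul_zero, zero_mul]
      have hsub : Finset.Icc (k - (m:ℤ)) (k + m) ⊆ Finset.Icc (-((n:ℤ)+m)) ((n:ℤ)+m) := by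
        intro j hj
        simp only [Finset.mem_Icc] at *
        omega
      rw [← Finset.sum_subset hsub hzero]
      refine (Finset.sum_nbij' (fun j => j - k) (fun l => l + k) ?_ ?_ ?_ ?_ ?_).symm
      · intro l hl; beta_reduce; simp only [Finset.mem_Icc] at *; omega
      · intro l hl; beta_reduce; simp only [Finset.mem_Icc] at *; omega
      · intro l _; beta_reduce; ring
      · intro l _; beta_reduce; ring
      · intro j _
        beta_reduce
        rw [show c k * ee k t * (d (j - k) * ee (j - k) t)
            = c k * d (j - k) * (ee k t * ee (j - k) t) by ring, ee_mul,
          show k + (j - k) = j by ring]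
    rw [Finset.sum_congr rfl inner, Finset.sum_comm]
    refine Finset.sum_congr rfl fun j _ => ?_
    rw [convC, Finset.sum_mul]

/-- top coefficient of the convolution -/
lemma convC_top {n m : ℕ} {c d : ℤ → ℂ} (hd : ∀ k : ℤ, m < k.natAbs → d k = 0) :
    convC n c d ((n : ℤ) + m) = c n * d m := by
  rw [convC]
  rw [Finset.sum_eq_single_of_mem (n : ℤ) (by simp only [Finset.mem_Icc]; omega)]
  · congr 1
    congr 1
    ring
  · intro k hk hkn
    simp only [Finset.mem_Icc] at hk
    rw [hd ((n:ℤ) + m - k) (by omega), mul_zero]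
/-- pointwise derivative of the exponential sum -/
lemma zrep_hasDerivAt {f : ℝ → ℝ} {n : ℕ} {c : ℤ → ℂ} (hf : ZRep f n c) (t : ℝ) :
    HasDerivAt f (∑ k ∈ Finset.Icc (-(n:ℤ)) n, ((k : ℤ) * Complex.I * c k * ee k t)).re t := by
  have hterm : ∀ k : ℤ, HasDerivAt (fun s : ℝ => c k * ee k s) ((k : ℂ) * Complex.I * c k * ee k t) t := by
    intro k
    have h1 : HasDerivAt (fun s : ℝ => ((s : ℂ))) 1 t := by
      simpa using (hasDerivAt_id t).ofReal_comp
    have h2 : HasDerivAt (fun s : ℝ => ((s : ℂ) * ((k : ℂ) * Complex.I))) ((k : ℂ) * Complex.I) t := by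
      simpa using h1.mul_const ((k : ℂ) * Complex.I)
    have h3 : HasDerivAt (fun s : ℝ => Complex.exp ((s : ℂ) * ((k : ℂ) * Complex.I)))
        (Complex.exp ((t : ℂ) * ((k : ℂ) * Complex.I)) * ((k : ℂ) * Complex.I)) t := h2.cexp
    have heq : (fun s : ℝ => c k * ee k s)
        = fun s : ℝ => c k * Complex.exp ((s : ℂ) * ((k : ℂ) * Complex.I)) := by
      funext s
      rw [ee]
      ring_nf
    rw [heq]
    have := h3.const_mul (c k)
    exact this.congr_deriv (by rw [ee]; ring_nf)
  have hsum : HasDerivAt (fun s : ℝ => ∑ k ∈ Finset.Icc (-(n:ℤ)) n, c k * ee k s)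
      (∑ k ∈ Finset.Icc (-(n:ℤ)) n, ((k : ℤ) * Complex.I * c k * ee k t)) t := by
    exact HasDerivAt.fun_sum (u := Finset.Icc (-(n:ℤ)) n) (fun k _ => hterm k)
  have hre : HasDerivAt (fun s : ℝ => (∑ k ∈ Finset.Icc (-(n:ℤ)) n, c k * ee k s).re)
      (∑ k ∈ Finset.Icc (-(n:ℤ)) n, ((k : ℤ) * Complex.I * c k * ee k t)).re t := by
    exact (Complex.reCLM.hasFDerivAt.comp_hasDerivAt t hsum)
  have hfeq : f = fun s : ℝ => (∑ k ∈ Finset.Icc (-(n:ℤ)) n, c k * ee k s).re := by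
    funext s
    rw [← hf.2.2 s]
    simp
  rw [hfeq]
  exact hre

lemma zrep_differentiable {f : ℝ → ℝ} {n : ℕ} {c : ℤ → ℂ} (hf : ZRep f n c) :
    Differentiable ℝ f := fun t => (zrep_hasDerivAt hf t).differentiableAt

/-- the derivative has the expected representation -/
lemma zrep_deriv {f : ℝ → ℝ} {n : ℕ} {c : ℤ → ℂ} (hf : ZRep f n c) :
    ZRep (deriv f) n (fun k => (k : ℂ) * Complex.I * c k) := by
  have hsym := hf.1
  refine ⟨fun k => ?_, fun k hk => ?_, fun t => ?_⟩
  · beta_reduce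
    rw [hsym k]
    push_cast
    simp only [map_mul, Complex.conj_I, map_intCast]
    ring
  · beta_reduce
    rw [hf.2.1 k hk, mul_zero]
  · -- realness of the derivative sum
    set D : ℂ := ∑ k ∈ Finset.Icc (-(n:ℤ)) n, ((k : ℤ) * Complex.I * c k * ee k t) with hD
    have hder : deriv f t = D.re := (zrep_hasDerivAt hf t).deriv
    have hDreal : (starRingEnd ℂ) D = D := by
      rw [hD, map_sum]
      refine Finset.sum_nbij' (fun k => -k) (fun k => -k) ?_ ?_ ?_ ?_ ?_
      · intro k hk; simp only [Finset.mem_Icc] at *; omega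
      · intro k hk; simp only [Finset.mem_Icc] at *; omega
      · intro k _; ring
      · intro k _; ring
      · intro k _
        beta_reduce
        rw [map_mul, map_mul, map_mul, conj_ee, ← hsym k, Complex.conj_I, map_intCast]
        push_cast
        ring
    have hDre : (D.re : ℂ) = D := by rw [← Complex.conj_eq_iff_re]; exact hDreal
    rw [hder, hDre, hD]
lemma isTrigPoly_nonempty {f : ℝ → ℝ} (hf : IsTrigPoly f) : (trigSet f).Nonempty := by
  obtain ⟨n, a, b, h⟩ := hf
  exact ⟨n, a, b, h⟩

lemma trigDegree_eq_sInf (f : ℝ → ℝ) : trigDegree f = sInf (trigSet f) := rfl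

lemma exists_zrep_degree {f : ℝ → ℝ} (hf : IsTrigPoly f) :
    ∃ c, ZRep f (trigDegree f) c :=
  trigSet_to_zrep (Nat.sInf_mem (isTrigPoly_nonempty hf))

lemma zrep_neg {f : ℝ → ℝ} {n : ℕ} {c : ℤ → ℂ} (hf : ZRep f n c) :
    ZRep (fun t => -f t) n (fun k => -c k) := by
  refine ⟨fun k => ?_, fun k hk => ?_, fun t => ?_⟩
  · beta_reduce
    rw [hf.1 k, map_neg]
  · beta_reduce
    rw [hf.2.1 k hk, neg_zero]
  · push_cast
    rw [hf.2.2 t, ← Finset.sum_neg_distrib]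
    refine Finset.sum_congr rfl fun k _ => ?_
    ring

/-- the basic ODE identity for an invariant curve -/
lemma ode_identity (A B P : ℝ → ℝ) (hPt : ∀ t, P t ≠ 0) (h : IsInvariantCurveOne A B P) :
    ∀ t, deriv P t * P t + B t * P t + A t = 0 := by
  obtain ⟨K, -, hK⟩ := h
  intro t
  have h1 := hK t (P t)⁻¹
  rw [mul_inv_cancel₀ (hPt t)] at h1
  simp only [sub_self, mul_zero] at h1
  have hp := hPt t
  field_simp at h1
  have h2 : (deriv P t * P t + B t * P t + A t) * (P t) ^ 4 = 0 := by linear_combination -(P t) ^ 4 * h1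
  exact (mul_eq_zero.mp h2).resolve_right (pow_ne_zero 4 hp)

/-- the pairwise identity -/
lemma pair_identity (A B P Q : ℝ → ℝ)
    (hdP : Differentiable ℝ P) (hdQ : Differentiable ℝ Q)
    (eqP : ∀ t, deriv P t * P t + B t * P t + A t = 0)
    (eqQ : ∀ t, deriv Q t * Q t + B t * Q t + A t = 0) :
    ∀ t, A t * (P t - Q t) = deriv (fun s => P s - Q s) t * (P t * Q t) := by
  intro t
  rw [deriv_fun_sub (hdP t) (hdQ t)]
  linear_combination (P t) * (eqQ t) - (Q t) * (eqP t)

/-- constant detection -/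
lemma trigDegree_zero_const {f : ℝ → ℝ} (hf : IsTrigPoly f) (h0 : trigDegree f = 0) :
    ∃ r : ℝ, f = fun _ => r := by
  obtain ⟨c, hc⟩ := exists_zrep_degree hf
  rw [h0] at hc
  exact ⟨(c 0).re, funext (zrep_zero_const hc)⟩

lemma nonconst_degree_pos {f : ℝ → ℝ} (hf : IsTrigPoly f) (hnc : ∀ r : ℝ, f ≠ fun _ => r) :
    1 ≤ trigDegree f := by
  by_contra h
  obtain ⟨r, hr⟩ := trigDegree_zero_const hf (by omega)
  exact hnc r hr


/-- the key degree identity for two distinct invariant curves -/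
lemma key_deg (A B : ℝ → ℝ) (hA0 : A ≠ 0) (hAtrig : IsTrigPoly A) {P Q : ℝ → ℝ}
    (hP : IsTrigPoly P) (hQ : IsTrigPoly Q) (hPt : ∀ t, P t ≠ 0) (hQt : ∀ t, Q t ≠ 0)
    (hPnc : ∀ r : ℝ, P ≠ fun _ => r) (hQnc : ∀ r : ℝ, Q ≠ fun _ => r)
    (hPinv : IsInvariantCurveOne A B P) (hQinv : IsInvariantCurveOne A B Q)
    (hPQ : P ≠ Q) :
    trigDegree A = trigDegree P + trigDegree Q := by
  obtain ⟨cA, hcA⟩ := exists_zrep_degree hAtrig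
  obtain ⟨cP, hcP⟩ := exists_zrep_degree hP
  obtain ⟨cQ, hcQ⟩ := exists_zrep_degree hQ
  have hdP : Differentiable ℝ P := zrep_differentiable hcP
  have hdQ : Differentiable ℝ Q := zrep_differentiable hcQ
  have eqP := ode_identity A B P hPt hPinv
  have eqQ := ode_identity A B Q hQt hQinv
  have hfun := pair_identity A B P Q hdP hdQ eqP eqQ
  -- d is a trig poly
  have hdtrig : IsTrigPoly (fun s => P s - Q s) := by
    have := zrep_sub (hcP.mono (le_max_left (trigDegree P) (trigDegree Q)))
      (hcQ.mono (le_max_right (trigDegree P) (trigDegree Q)))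
    obtain ⟨a, b, hab⟩ := zrep_to_trigSet this
    exact ⟨max (trigDegree P) (trigDegree Q), a, b, hab⟩
  obtain ⟨cd, hcd⟩ := exists_zrep_degree hdtrig
  -- d is not the zero function
  obtain ⟨t₀, ht₀⟩ : ∃ t, P t ≠ Q t := by
    by_contra hco
    push_neg at hco
    exact hPQ (funext hco)
  -- δ ≥ 1
  have hδ1 : 1 ≤ trigDegree (fun s => P s - Q s) := by
    by_contra hco
    obtain ⟨r, hr⟩ := trigDegree_zero_const hdtrig (by omega)
    have hr0 : r ≠ 0 := by
      intro h0
      apply ht₀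
      have := congrFun hr t₀
      simp only [h0] at this
      linarith
    refine hA0 (funext fun t => ?_)
    have h1 := hfun t
    rw [hr] at h1
    have h2 := congrFun hr t
    simp only [deriv_const, zero_mul] at h1
    rw [h2] at h1
    exact (mul_eq_zero.mp h1).resolve_right hr0
  have hp1 : 1 ≤ trigDegree P := nonconst_degree_pos hP hPnc
  have hq1 : 1 ≤ trigDegree Q := nonconst_degree_pos hQ hQnc
  -- nonzero top coefficients
  have hcdtop : cd (trigDegree (fun s => P s - Q s)) ≠ 0 := top_coeff_ne_zero_pos hcd hδ1
  have hcPtop : cP (trigDegree P) ≠ 0 := top_coeff_ne_zero_pos hcP hp1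
  have hcQtop : cQ (trigDegree Q) ≠ 0 := top_coeff_ne_zero_pos hcQ hq1
  have hcAtop : cA (trigDegree A) ≠ 0 := by
    rcases Nat.eq_zero_or_pos (trigDegree A) with h0 | hpos
    · obtain ⟨t₁, ht₁⟩ : ∃ t, A t ≠ 0 := by
        by_contra hco
        push_neg at hco
        exact hA0 (funext hco)
      intro hc
      apply ht₁
      have hconst := zrep_zero_const (h0 ▸ hcA)
      have hc0 : cA 0 = 0 := by rw [h0] at hc; exact_mod_cast hc
      rw [hconst t₁, hc0]
      simp
    · exact top_coeff_ne_zero_pos hcA hpos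
  -- the two representations of A·d
  have hF : ZRep (fun t => A t * (P t - Q t)) (trigDegree A + trigDegree (fun s => P s - Q s))
      (convC (trigDegree A) cA cd) := zrep_mul hcA hcd
  have hFG : (fun t => A t * (P t - Q t))
      = (fun t => deriv (fun s => P s - Q s) t * (P t * Q t)) := funext hfun
  have hG : ZRep (fun t => A t * (P t - Q t))
      (trigDegree (fun s => P s - Q s) + (trigDegree P + trigDegree Q))
      (convC (trigDegree (fun s => P s - Q s))
        (fun k => (k : ℂ) * Complex.I * cd k) (convC (trigDegree P) cP cQ)) := by
    rw [hFG]
    exact zrep_mul (zrep_deriv hcd) (zrep_mul hcP hcQ)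
  have huniq := zrep_unique hF hG
  -- compare top coefficients
  have hFtop : convC (trigDegree A) cA cd
      ((trigDegree A : ℤ) + (trigDegree (fun s => P s - Q s))) ≠ 0 := by
    rw [convC_top hcd.2.1]
    exact mul_ne_zero hcAtop hcdtop
  have hGin : convC (trigDegree P) cP cQ ((trigDegree P : ℤ) + trigDegree Q) = cP (trigDegree P) * cQ (trigDegree Q) :=
    convC_top hcQ.2.1
  have hGtop : convC (trigDegree (fun s => P s - Q s))
      (fun k => (k : ℂ) * Complex.I * cd k) (convC (trigDegree P) cP cQ)
      ((trigDegree (fun s => P s - Q s) : ℤ) + ((trigDegree P + trigDegree Q : ℕ) : ℤ)) ≠ 0 := by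
    rw [convC_top (zrep_mul hcP hcQ).2.1]
    push_cast
    rw [hGin]
    beta_reduce
    refine mul_ne_zero (mul_ne_zero (mul_ne_zero ?_ Complex.I_ne_zero) hcdtop)
      (mul_ne_zero hcPtop hcQtop)
    have : trigDegree (fun s : ℝ => P s - Q s) ≠ 0 := by omega
    exact_mod_cast this
  -- conclude equality of degrees
  by_contra hne
  rcases Nat.lt_or_ge (trigDegree A) (trigDegree P + trigDegree Q) with hlt | hge
  · apply hGtop
    rw [← huniq]
    apply hF.2.1
    push_cast
    omega
  · have hgt : trigDegree P + trigDegree Q < trigDegree A := by omega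
    apply hFtop
    rw [huniq]
    apply hG.2.1
    push_cast
    omega
/-- bound on the degree of B when deg A = 2 deg P -/
lemma key_B (A B P : ℝ → ℝ) (hAtrig : IsTrigPoly A) (hBtrig : IsTrigPoly B)
    (hP : IsTrigPoly P) (hPt : ∀ t, P t ≠ 0) (hPnc : ∀ r : ℝ, P ≠ fun _ => r)
    (hPinv : IsInvariantCurveOne A B P)
    (hα : trigDegree A = 2 * trigDegree P) :
    trigDegree B ≤ trigDegree P := by
  by_contra hco
  push_neg at hco
  obtain ⟨cA, hcA⟩ := exists_zrep_degree hAtrig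
  obtain ⟨cB, hcB⟩ := exists_zrep_degree hBtrig
  obtain ⟨cP, hcP⟩ := exists_zrep_degree hP
  have hp1 : 1 ≤ trigDegree P := nonconst_degree_pos hP hPnc
  have hβ1 : 1 ≤ trigDegree B := by omega
  have eqP := ode_identity A B P hPt hPinv
  have hL : ZRep (fun t => B t * P t) (trigDegree B + trigDegree P)
      (convC (trigDegree B) cB cP) := zrep_mul hcB hcP
  have hR := zrep_sub (zrep_neg (zrep_mul (zrep_deriv hcP) hcP))
    (hcA.mono (by omega : trigDegree A ≤ trigDegree P + trigDegree P))
  have hEq : (fun t => B t * P t) = (fun t => -(deriv P t * P t) - A t) :=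
    funext fun t => by linear_combination eqP t
  rw [hEq] at hL
  have huniq := zrep_unique hL hR
  have htop : convC (trigDegree B) cB cP ((trigDegree B : ℤ) + trigDegree P) ≠ 0 := by
    rw [convC_top hcP.2.1]
    exact mul_ne_zero (top_coeff_ne_zero_pos hcB hβ1) (top_coeff_ne_zero_pos hcP hp1)
  apply htop
  rw [huniq]
  apply hR.2.1
  push_cast
  omega


end AuxiliaryLemmas

/-- If `deg A` is odd or `deg B > deg A / 2`, then the Abel equation `x' = A x³ + B x²`
has at most two pairwise distinct non-trivial invariant curves `1 - P(t)x = 0`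
with `P` non-constant and nonvanishing. -/
theorem at_most_two_nontrivial_invariant_curves
    (A B : ℝ → ℝ) (hA : IsTrigPoly A) (hB : IsTrigPoly B) (hA0 : A ≠ 0)
    (hdeg : Odd (trigDegree A) ∨ trigDegree A < 2 * trigDegree B) :
    {P : ℝ → ℝ | IsTrigPoly P ∧ (∀ t : ℝ, P t ≠ 0) ∧
      (∀ c : ℝ, P ≠ fun _ => c) ∧ IsInvariantCurveOne A B P}.encard ≤ 2 := by
  by_contra hcon
  have h2 : (2 : ℕ∞) < {P : ℝ → ℝ | IsTrigPoly P ∧ (∀ t : ℝ, P t ≠ 0) ∧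
      (∀ c : ℝ, P ≠ fun _ => c) ∧ IsInvariantCurveOne A B P}.encard := not_le.mp hcon
  have h3 : (3 : ℕ∞) ≤ {P : ℝ → ℝ | IsTrigPoly P ∧ (∀ t : ℝ, P t ≠ 0) ∧
      (∀ c : ℝ, P ≠ fun _ => c) ∧ IsInvariantCurveOne A B P}.encard := by
    have h4 := Order.add_one_le_of_lt h2
    exact le_trans (by norm_num) h4
  obtain ⟨T, hTS, hT3⟩ := Set.exists_subset_encard_eq h3
  rw [Set.encard_eq_three] at hT3
  obtain ⟨P₁, P₂, P₃, h12, h13, h23, rfl⟩ := hT3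
  have hm1 : P₁ ∈ {P : ℝ → ℝ | IsTrigPoly P ∧ (∀ t : ℝ, P t ≠ 0) ∧
      (∀ c : ℝ, P ≠ fun _ => c) ∧ IsInvariantCurveOne A B P} := hTS (by simp)
  have hm2 : P₂ ∈ {P : ℝ → ℝ | IsTrigPoly P ∧ (∀ t : ℝ, P t ≠ 0) ∧
      (∀ c : ℝ, P ≠ fun _ => c) ∧ IsInvariantCurveOne A B P} := hTS (by simp)
  have hm3 : P₃ ∈ {P : ℝ → ℝ | IsTrigPoly P ∧ (∀ t : ℝ, P t ≠ 0) ∧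
      (∀ c : ℝ, P ≠ fun _ => c) ∧ IsInvariantCurveOne A B P} := hTS (by simp)
  obtain ⟨ht1, hv1, hn1, hi1⟩ := hm1
  obtain ⟨ht2, hv2, hn2, hi2⟩ := hm2
  obtain ⟨ht3, hv3, hn3, hi3⟩ := hm3
  have k12 := key_deg A B hA0 hA ht1 ht2 hv1 hv2 hn1 hn2 hi1 hi2 h12
  have k13 := key_deg A B hA0 hA ht1 ht3 hv1 hv3 hn1 hn3 hi1 hi3 h13
  have k23 := key_deg A B hA0 hA ht2 ht3 hv2 hv3 hn2 hn3 hi2 hi3 h23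
  have hα : trigDegree A = 2 * trigDegree P₁ := by omega
  rcases hdeg with hodd | hlt
  · rw [hα] at hodd
    obtain ⟨j, hj⟩ := hodd
    omega
  · have := key_B A B P₁ hA hB ht1 hv1 hn1 hi1 hα
    omega
end
end

section
/- Let P be a non-zero, non-unit element of the ring ℝ[cos t, sin t] of real trigonometric polynomials with P(t) ≠ 0 for all t ∈ ℝ. Then P has a factorization into irreducible elements of ℝ[cos t, sin t] that is unique up to the order of the factors and multiplication by units. -/
open Real Set

noncomputable section

open Polynomial

/-- `E t = exp (i t)` -/
def E (t : ℝ) : ℂ := Complex.exp (t * Complex.I)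

lemma E_eq (t : ℝ) : E t = (Real.cos t : ℂ) + (Real.sin t : ℂ) * Complex.I := by
  rw [E, Complex.exp_mul_I, Complex.ofReal_cos, Complex.ofReal_sin]

lemma E_mul_E_neg (t : ℝ) : E t * E (-t) = 1 := by
  rw [E, E, ← Complex.exp_add]; push_cast; ring_nf; exact Complex.exp_zero

lemma E_ne_zero (t : ℝ) : E t ≠ 0 := Complex.exp_ne_zero _

lemma E_inv (t : ℝ) : (E t)⁻¹ = E (-t) :=
  inv_eq_of_mul_eq_one_right (E_mul_E_neg t)

lemma E_zpow (t : ℝ) (m : ℤ) :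
    E t ^ m = (Real.cos (m * t) : ℂ) + (Real.sin (m * t) : ℂ) * Complex.I := by
  have h1 : E t ^ m = E (m * t) := by
    rw [E, E, ← Complex.exp_int_mul]; congr 1; push_cast; ring
  rw [h1, E_eq]

/-- a function has representation `f t = E t ^ (-n) * q(E t)` -/
def HasRep (f : ℝ → ℝ) (n : ℕ) (q : Polynomial ℂ) : Prop :=
  ∀ t : ℝ, E t ^ n * (f t : ℂ) = q.eval (E t)

lemma eq_zero_of_eval_E (q : Polynomial ℂ) (h : ∀ t : ℝ, q.eval (E t) = 0) : q = 0 := by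
  refine Polynomial.eq_zero_of_infinite_isRoot q ?_
  have hinj : Set.InjOn E (Set.Ioo (0:ℝ) 1) := by
    intro a ha b hb hab
    have h1 : Complex.exp ((a - b : ℝ) * Complex.I) = 1 := by
      rw [Complex.ofReal_sub, sub_mul, Complex.exp_sub]
      rw [E, E] at hab; rw [hab, div_self (Complex.exp_ne_zero _)]
    rw [Complex.exp_eq_one_iff] at h1
    obtain ⟨k, hk⟩ := h1
    have hk' : (a - b : ℝ) = (k : ℝ) * (2 * Real.pi) := by
      have := mul_right_cancel₀ Complex.I_ne_zero (by
        rw [hk]; push_cast; ring_nf : ((a - b : ℝ) : ℂ) * Complex.I = ((k : ℝ) * (2 * Real.pi) : ℝ) * Complex.I)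
      exact_mod_cast this
    have hpi := Real.pi_gt_three
    have hk0 : k = 0 := by
      by_contra hkne
      have hk1 : (1:ℝ) ≤ |(k:ℝ)| := by
        rw [← Int.cast_abs]
        exact_mod_cast Int.one_le_abs (by omega)
      have habs : |a - b| < 1 := by
        rw [abs_lt]; constructor <;> nlinarith [ha.1, ha.2, hb.1, hb.2]
      rw [hk', abs_mul] at habs
      have h2 : |(2:ℝ) * Real.pi| = 2 * Real.pi := abs_of_pos (by nlinarith)
      rw [h2] at habs
      nlinarith
    rw [hk0] at hk'; norm_num at hk'; linarith
  have hinf : Set.Infinite (E '' (Set.Ioo (0:ℝ) 1)) :=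
    ((Set.infinite_image_iff hinj).mpr (Set.Ioo_infinite (by norm_num)))
  refine Set.Infinite.mono ?_ hinf
  rintro _ ⟨t, _, rfl⟩
  exact h t

lemma hasRep_cross {f : ℝ → ℝ} {n₁ n₂ : ℕ} {q₁ q₂ : Polynomial ℂ}
    (h₁ : HasRep f n₁ q₁) (h₂ : HasRep f n₂ q₂) :
    X ^ n₂ * q₁ = X ^ n₁ * q₂ := by
  have := eq_zero_of_eval_E (X ^ n₂ * q₁ - X ^ n₁ * q₂) (fun t => by
    simp only [eval_sub, eval_mul, eval_pow, eval_X]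
    rw [← h₁ t, ← h₂ t]; ring)
  linear_combination this

lemma hasRep_unique {f : ℝ → ℝ} {n : ℕ} {q₁ q₂ : Polynomial ℂ}
    (h₁ : HasRep f n q₁) (h₂ : HasRep f n q₂) : q₁ = q₂ := by
  have := hasRep_cross h₁ h₂
  exact mul_left_cancel₀ (pow_ne_zero _ X_ne_zero) this

lemma hasRep_mul {f g : ℝ → ℝ} {n₁ n₂ : ℕ} {q₁ q₂ : Polynomial ℂ}
    (h₁ : HasRep f n₁ q₁) (h₂ : HasRep g n₂ q₂) :
    HasRep (f * g) (n₁ + n₂) (q₁ * q₂) := by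
  intro t
  simp only [Pi.mul_apply, eval_mul, pow_add]
  push_cast
  rw [← h₁ t, ← h₂ t]; ring


lemma E_conj (t : ℝ) : (starRingEnd ℂ) (E t) = E (-t) := by
  rw [E_eq, E_eq]
  push_cast [Real.cos_neg, Real.sin_neg]
  simp [Complex.ext_iff]

lemma E_conj_pow (t : ℝ) (j : ℕ) : (starRingEnd ℂ) (E t ^ j) = (E t)⁻¹ ^ j := by
  rw [map_pow, E_conj, E_inv]


lemma exists_rep {f : ℝ → ℝ} (hf : f ∈ TrigPolyRing) :
    ∃ n q, q.natDegree ≤ 2 * n ∧ HasRep f n q := by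
  induction hf using Algebra.adjoin_induction with
  | mem g hg =>
    rcases hg with hg | hg
    · refine ⟨1, Polynomial.C (1/2 : ℂ) * (X ^ 2 + 1), ?_, ?_⟩
      · compute_degree
      · intro t
        subst hg
        simp only [eval_mul, eval_add, eval_pow, eval_C, eval_X, eval_one, pow_one]
        have h1 := E_mul_E_neg t
        have hc : (Real.cos t : ℂ) = (E t + E (-t)) / 2 := by
          rw [E_eq, E_eq]; push_cast [Real.cos_neg, Real.sin_neg]; ring
        have h2 : E t * (E t + E (-t)) = E t ^ 2 + 1 := by linear_combination h1
        rw [hc, ← mul_div_assoc, h2]; ring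
    · refine ⟨1, Polynomial.C (1/(2*Complex.I) : ℂ) * (X ^ 2 - 1), ?_, ?_⟩
      · compute_degree
      · intro t
        subst hg
        simp only [eval_mul, eval_sub, eval_pow, eval_C, eval_X, eval_one, pow_one]
        have h1 := E_mul_E_neg t
        have hs : (Real.sin t : ℂ) = (E t - E (-t)) / (2 * Complex.I) := by
          rw [E_eq, E_eq, eq_div_iff (by simp [Complex.I_ne_zero] : (2 : ℂ) * Complex.I ≠ 0)]
          push_cast [Real.cos_neg, Real.sin_neg]; ring
        have h2 : E t * (E t - E (-t)) = E t ^ 2 - 1 := by linear_combination -h1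
        rw [hs, ← mul_div_assoc, h2]; ring
  | algebraMap r =>
    refine ⟨0, Polynomial.C (r : ℂ), by simp, fun t => by simp [Algebra.algebraMap_eq_smul_one]⟩
  | add x y hx hy ihx ihy =>
    obtain ⟨n₁, q₁, hd₁, hr₁⟩ := ihx
    obtain ⟨n₂, q₂, hd₂, hr₂⟩ := ihy
    refine ⟨n₁ + n₂, X ^ n₂ * q₁ + X ^ n₁ * q₂, ?_, ?_⟩
    · apply le_trans (natDegree_add_le _ _)
      simp only [max_le_iff]
      constructor <;> apply le_trans (natDegree_mul_le) <;> simp [natDegree_X_pow] <;> omega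
    · intro t
      simp only [Pi.add_apply, eval_add, eval_mul, eval_pow, eval_X]
      push_cast
      rw [← hr₁ t, ← hr₂ t]; ring
  | mul x y hx hy ihx ihy =>
    obtain ⟨n₁, q₁, hd₁, hr₁⟩ := ihx
    obtain ⟨n₂, q₂, hd₂, hr₂⟩ := ihy
    refine ⟨n₁ + n₂, q₁ * q₂, ?_, hasRep_mul hr₁ hr₂⟩
    apply le_trans (natDegree_mul_le); omega

/-- coefficient symmetry coming from `f` being real-valued -/
lemma coeff_symm {f : ℝ → ℝ} {n : ℕ} {q : Polynomial ℂ} (hd : q.natDegree ≤ 2 * n)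
    (hr : HasRep f n q) (k : ℕ) (hk : k ≤ 2 * n) :
    q.coeff k = (starRingEnd ℂ) (q.coeff (2 * n - k)) := by
  set q₂ : Polynomial ℂ := ∑ j ∈ Finset.range (2 * n + 1),
      Polynomial.C ((starRingEnd ℂ) (q.coeff (2 * n - j))) * X ^ j with hq₂
  have hrep₂ : HasRep f n q₂ := by
    intro t
    have heval : q₂.eval (E t) = ∑ j ∈ Finset.range (2 * n + 1),
        (starRingEnd ℂ) (q.coeff (2 * n - j)) * E t ^ j := by
      rw [hq₂]; simp [eval_finset_sum]
    rw [heval]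
    have hre : ∑ j ∈ Finset.range (2 * n + 1),
        (starRingEnd ℂ) (q.coeff (2 * n - j)) * E t ^ j
        = E t ^ (2 * n) * (starRingEnd ℂ) (∑ j ∈ Finset.range (2 * n + 1),
            (q.coeff j) * E t ^ j) := by
      rw [map_sum, Finset.mul_sum]
      rw [← Finset.sum_range_reflect]
      apply Finset.sum_congr rfl
      intro j hj
      simp only [Finset.mem_range] at hj
      have hj' : j ≤ 2 * n := by omega
      have h2 : 2 * n + 1 - 1 - j = 2 * n - j := by omega
      rw [h2, map_mul]
      rw [show 2 * n - (2 * n - j) = j from by omega, E_conj_pow]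
      have hEne := E_ne_zero t
      field_simp
      rw [pow_sub₀ _ hEne hj']
      ring
    rw [hre]
    have heq : (∑ j ∈ Finset.range (2 * n + 1), (q.coeff j) * E t ^ j) = q.eval (E t) := by
      rw [Polynomial.eval_eq_sum_range' (by omega : q.natDegree < 2 * n + 1)]
    rw [heq, ← hr t, map_mul]
    have : (starRingEnd ℂ) ((f t : ℂ)) = (f t : ℂ) := Complex.conj_ofReal _
    rw [this]
    rw [E_conj_pow]
    have hEne := E_ne_zero t
    rw [inv_pow, two_mul, pow_add]; field_simp
  have huni := hasRep_unique hr hrep₂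
  have hc2 : q₂.coeff k = (starRingEnd ℂ) (q.coeff (2 * n - k)) := by
    rw [hq₂, Polynomial.finset_sum_coeff]
    simp only [Polynomial.coeff_C_mul, Polynomial.coeff_X_pow]
    rw [Finset.sum_eq_single k]
    · simp
    · intro b _ hb; simp [hb.symm]
    · intro hk'; simp at hk'; omega
  rw [← hc2]
  exact congrArg (fun p => Polynomial.coeff p k) huni

lemma root_inv {f : ℝ → ℝ} {n : ℕ} {q : Polynomial ℂ} (hd : q.natDegree ≤ 2 * n)
    (hr : HasRep f n q) {a : ℂ} (ha : a ≠ 0) (hroot : q.eval a = 0) :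
    q.eval ((starRingEnd ℂ) a)⁻¹ = 0 := by
  set b := ((starRingEnd ℂ) a)⁻¹ with hb
  have hca : (starRingEnd ℂ) a ≠ 0 := by simpa using ha
  have hbne : b ≠ 0 := inv_ne_zero hca
  have hcb : (starRingEnd ℂ) b = a⁻¹ := by
    rw [hb, map_inv₀, Complex.conj_conj]
  have he : q.eval b = ∑ j ∈ Finset.range (2 * n + 1), q.coeff j * b ^ j :=
    Polynomial.eval_eq_sum_range' (show q.natDegree < 2 * n + 1 by omega) b
  rw [he]
  have hterm : ∀ j ∈ Finset.range (2 * n + 1), q.coeff j * b ^ j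
      = (starRingEnd ℂ) (q.coeff (2 * n - j) * a⁻¹ ^ j) := by
    intro j hj
    simp only [Finset.mem_range] at hj
    rw [coeff_symm hd hr j (by omega), map_mul, map_pow, map_inv₀, ← hb]
  rw [Finset.sum_congr rfl hterm, ← map_sum]
  have hsum : (∑ j ∈ Finset.range (2 * n + 1), q.coeff (2 * n - j) * a⁻¹ ^ j)
      = a⁻¹ ^ (2 * n) * ∑ j ∈ Finset.range (2 * n + 1), q.coeff j * a ^ j := by
    rw [← Finset.sum_range_reflect, Finset.mul_sum]
    apply Finset.sum_congr rfl
    intro j hj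
    simp only [Finset.mem_range] at hj
    rw [show 2 * n + 1 - 1 - j = 2 * n - j from by omega,
        show 2 * n - (2 * n - j) = j from by omega]
    field_simp
    rw [one_div, inv_pow, inv_pow, pow_sub₀ _ ha (by omega : j ≤ 2 * n), mul_inv, inv_inv, mul_assoc]
  rw [hsum, ← Polynomial.eval_eq_sum_range' (show q.natDegree < 2 * n + 1 by omega) a, hroot,
    mul_zero, map_zero]

lemma cos_mem : Real.cos ∈ TrigPolyRing :=
  Algebra.subset_adjoin (by simp)

lemma sin_mem : Real.sin ∈ TrigPolyRing :=
  Algebra.subset_adjoin (by simp)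

lemma cos_sin_nat_mem (m : ℕ) :
    (fun t => Real.cos (m * t)) ∈ TrigPolyRing ∧ (fun t => Real.sin (m * t)) ∈ TrigPolyRing := by
  induction m with
  | zero =>
    constructor
    · have : (fun t : ℝ => Real.cos ((0:ℕ) * t)) = (1 : ℝ → ℝ) := by
        funext t; simp
      rw [this]; exact one_mem _
    · have : (fun t : ℝ => Real.sin ((0:ℕ) * t)) = (0 : ℝ → ℝ) := by
        funext t; simp
      rw [this]; exact zero_mem _
  | succ m ih =>
    constructor
    · have : (fun t : ℝ => Real.cos ((m + 1 : ℕ) * t))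
          = (fun t => Real.cos (m * t)) * Real.cos - (fun t => Real.sin (m * t)) * Real.sin := by
        funext t
        show Real.cos ((m + 1 : ℕ) * t) = Real.cos (m * t) * Real.cos t - Real.sin (m * t) * Real.sin t
        rw [← Real.cos_add]; push_cast; ring_nf
      rw [this]
      exact sub_mem (mul_mem ih.1 cos_mem) (mul_mem ih.2 sin_mem)
    · have : (fun t : ℝ => Real.sin ((m + 1 : ℕ) * t))
          = (fun t => Real.sin (m * t)) * Real.cos + (fun t => Real.cos (m * t)) * Real.sin := by
        funext t
        show Real.sin ((m + 1 : ℕ) * t) = Real.sin (m * t) * Real.cos t + Real.cos (m * t) * Real.sin t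
        rw [← Real.sin_add]; push_cast; ring_nf
      rw [this]
      exact add_mem (mul_mem ih.2 cos_mem) (mul_mem ih.1 sin_mem)

lemma cos_int_mem (m : ℤ) : (fun t => Real.cos (m * t)) ∈ TrigPolyRing := by
  rcases le_or_gt 0 m with h | h
  · obtain ⟨k, rfl⟩ := Int.eq_ofNat_of_zero_le h
    have heq : (fun t : ℝ => Real.cos (((k : ℕ) : ℤ) * t)) = (fun t => Real.cos ((k : ℕ) * t)) := by
      funext t; norm_num
    rw [heq]; exact (cos_sin_nat_mem k).1
  · obtain ⟨k, rfl⟩ : ∃ k : ℕ, m = -(k : ℤ) := ⟨m.natAbs, by omega⟩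
    have heq : (fun t : ℝ => Real.cos ((-(k:ℤ) : ℤ) * t)) = (fun t => Real.cos ((k : ℕ) * t)) := by
      funext t
      rw [show ((-(k:ℤ) : ℤ) : ℝ) * t = -(((k:ℕ) : ℝ) * t) from by push_cast; ring, Real.cos_neg]
    rw [heq]; exact (cos_sin_nat_mem k).1

lemma sin_int_mem (m : ℤ) : (fun t => Real.sin (m * t)) ∈ TrigPolyRing := by
  rcases le_or_gt 0 m with h | h
  · obtain ⟨k, rfl⟩ := Int.eq_ofNat_of_zero_le h
    have heq : (fun t : ℝ => Real.sin (((k : ℕ) : ℤ) * t)) = (fun t => Real.sin ((k : ℕ) * t)) := by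
      funext t; norm_num
    rw [heq]; exact (cos_sin_nat_mem k).2
  · obtain ⟨k, rfl⟩ : ∃ k : ℕ, m = -(k : ℤ) := ⟨m.natAbs, by omega⟩
    have heq : (fun t : ℝ => Real.sin ((-(k:ℤ) : ℤ) * t)) = -(fun t => Real.sin ((k : ℕ) * t)) := by
      funext t
      show Real.sin (((-(k:ℤ) : ℤ) : ℝ) * t) = -(Real.sin (((k:ℕ) : ℝ) * t))
      rw [show ((-(k:ℤ) : ℤ) : ℝ) * t = -(((k:ℕ) : ℝ) * t) from by push_cast; ring, Real.sin_neg]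
    rw [heq]; exact neg_mem ((cos_sin_nat_mem k).2)

set_option maxHeartbeats 1000000 in
/-- every real-valued function with a representation is a trig polynomial -/
lemma mem_of_hasRep {f : ℝ → ℝ} {n : ℕ} {q : Polynomial ℂ} (hr : HasRep f n q) :
    f ∈ TrigPolyRing := by
  set N := q.natDegree + 1 with hN
  have hval : ∀ t, (f t : ℂ) = ∑ k ∈ Finset.range N, q.coeff k * E t ^ ((k : ℤ) - n) := by
    intro t
    have h1 := hr t
    have h2 : q.eval (E t) = ∑ k ∈ Finset.range N, q.coeff k * E t ^ k :=
      Polynomial.eval_eq_sum_range' (by omega) (E t)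
    have hEn : E t ^ n ≠ 0 := pow_ne_zero _ (E_ne_zero t)
    have : (f t : ℂ) = (E t ^ n)⁻¹ * ∑ k ∈ Finset.range N, q.coeff k * E t ^ k := by
      rw [← h2, ← h1]; field_simp
    rw [this, Finset.mul_sum]
    apply Finset.sum_congr rfl
    intro k _
    rw [show ((k : ℤ) - n) = (k : ℤ) + (-(n:ℤ)) from by ring, zpow_add₀ (E_ne_zero t)]
    rw [zpow_natCast, zpow_neg, zpow_natCast]
    ring
  have hfeq : f = fun t => ∑ k ∈ Finset.range N,
      ((q.coeff k).re * Real.cos (((((k : ℤ) - (n : ℤ)) : ℤ) : ℝ) * t)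
        - (q.coeff k).im * Real.sin (((((k : ℤ) - (n : ℤ)) : ℤ) : ℝ) * t)) := by
    funext t
    have h := hval t
    have : f t = (↑(f t) : ℂ).re := by simp
    rw [this, h, Complex.re_sum]
    apply Finset.sum_congr rfl
    intro k _
    rw [E_zpow]
    simp only [Complex.mul_re, Complex.add_re, Complex.add_im, Complex.mul_im,
      Complex.ofReal_re, Complex.ofReal_im, Complex.I_re, Complex.I_im]
    push_cast
    ring_nf
  set g : ℕ → TrigPolyRing := fun k =>
      (q.coeff k).re • (⟨fun t => Real.cos (((((k : ℤ) - (n : ℤ)) : ℤ) : ℝ) * t), cos_int_mem ((k : ℤ) - n)⟩ : TrigPolyRing)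
      - (q.coeff k).im • (⟨fun t => Real.sin (((((k : ℤ) - (n : ℤ)) : ℤ) : ℝ) * t), sin_int_mem ((k : ℤ) - n)⟩ : TrigPolyRing)
    with hg
  have hcoe : ∀ t, (↑(∑ k ∈ Finset.range N, g k) : ℝ → ℝ) t
      = ∑ k ∈ Finset.range N,
        ((q.coeff k).re * Real.cos (((((k : ℤ) - (n : ℤ)) : ℤ) : ℝ) * t)
          - (q.coeff k).im * Real.sin (((((k : ℤ) - (n : ℤ)) : ℤ) : ℝ) * t)) := by
    intro t
    rw [AddSubmonoidClass.coe_finset_sum, Finset.sum_apply]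
    apply Finset.sum_congr rfl
    intro k _
    simp only [hg, AddSubgroupClass.coe_sub, SetLike.val_smul, Pi.sub_apply, Pi.smul_apply,
      smul_eq_mul]
  have hfg : f = ↑(∑ k ∈ Finset.range N, g k) := by
    funext t
    rw [hfeq, hcoe]
  rw [hfg]
  exact (∑ k ∈ Finset.range N, g k).2

/-- the basic nonvanishing building block `|e^{it} - a|²` -/
def paF (a : ℂ) : ℝ → ℝ :=
  fun t => 1 + Complex.normSq a - 2 * a.re * Real.cos t - 2 * a.im * Real.sin t

lemma paF_eq_normSq (a : ℂ) (t : ℝ) : paF a t = Complex.normSq (E t - a) := by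
  rw [Complex.normSq_apply]
  have h1 : (E t - a).re = Real.cos t - a.re := by
    rw [E_eq]; simp [Complex.cos_ofReal_re]
  have h2 : (E t - a).im = Real.sin t - a.im := by
    rw [E_eq]; simp [Complex.sin_ofReal_re]
  rw [h1, h2]
  simp only [paF, Complex.normSq_apply]
  nlinarith [Real.sin_sq_add_cos_sq t]

lemma paF_pos (a : ℂ) (ha : ‖a‖ ≠ 1) (t : ℝ) : 0 < paF a t := by
  rw [paF_eq_normSq]
  apply Complex.normSq_pos.2
  intro h
  apply ha
  rw [← sub_eq_zero.mp h, E, Complex.norm_exp]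
  simp

lemma paF_mem (a : ℂ) : paF a ∈ TrigPolyRing := by
  have : paF a = (fun _ => 1 + Complex.normSq a) - (2 * a.re) • Real.cos - (2 * a.im) • Real.sin := by
    funext t; simp only [paF, Pi.sub_apply, Pi.smul_apply, smul_eq_mul]
  rw [this]
  refine sub_mem (sub_mem ?_ (SMulMemClass.smul_mem _ cos_mem)) (SMulMemClass.smul_mem _ sin_mem)
  have hc : (fun _ : ℝ => 1 + Complex.normSq a) = algebraMap ℝ (ℝ → ℝ) (1 + Complex.normSq a) := rfl
  rw [hc]
  exact Subalgebra.algebraMap_mem _ _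


/-! new part -/

def qa (a : ℂ) : Polynomial ℂ :=
  Polynomial.C (-(starRingEnd ℂ) a) * (X - Polynomial.C a) * (X - Polynomial.C ((starRingEnd ℂ) a)⁻¹)

lemma paF_coe (a : ℂ) (t : ℝ) :
    ((paF a t : ℝ) : ℂ) = (E t - a) * (E (-t) - (starRingEnd ℂ) a) := by
  rw [paF_eq_normSq]
  have h := Complex.mul_conj (E t - a)
  rw [← h, map_sub, E_conj]

lemma qa_ne_zero {a : ℂ} (ha0 : a ≠ 0) : qa a ≠ 0 := by
  have hca : (starRingEnd ℂ) a ≠ 0 := by simpa using ha0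
  exact mul_ne_zero (mul_ne_zero (by simpa using hca) (X_sub_C_ne_zero a))
    (X_sub_C_ne_zero _)

lemma qa_eval_a (a : ℂ) : (qa a).eval a = 0 := by
  simp [qa]

lemma paF_hasRep {a : ℂ} (ha0 : a ≠ 0) : HasRep (paF a) 1 (qa a) := by
  intro t
  have hca : (starRingEnd ℂ) a ≠ 0 := by simpa using ha0
  have h2 := E_mul_E_neg t
  rw [pow_one, paF_coe]
  simp only [qa, eval_mul, eval_sub, eval_C, eval_X]
  have hinv : (starRingEnd ℂ) a * ((starRingEnd ℂ) a)⁻¹ = 1 := mul_inv_cancel₀ hca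
  linear_combination (E t - a) * h2 - (E t - a) * hinv

def paE (a : ℂ) : TrigPolyRing := ⟨paF a, paF_mem a⟩

lemma key {f : ℝ → ℝ} {n : ℕ} {q : Polynomial ℂ} (hd : q.natDegree ≤ 2 * n)
    (hr : HasRep f n q) (hq0 : q ≠ 0) {a : ℂ} (ha0 : a ≠ 0) (ha1 : ‖a‖ ≠ 1)
    (hroot : q.eval a = 0) :
    1 ≤ n ∧ ∃ (f' : ℝ → ℝ) (q' : Polynomial ℂ), q'.natDegree ≤ 2 * (n - 1) ∧
      HasRep f' (n - 1) q' ∧ (∀ t, f t = paF a t * f' t) ∧ f' ∈ TrigPolyRing := by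
  classical
  set b : ℂ := ((starRingEnd ℂ) a)⁻¹ with hbdef
  have hca : (starRingEnd ℂ) a ≠ 0 := by simpa using ha0
  have hb0 : b ≠ 0 := inv_ne_zero hca
  have hab : a ≠ b := by
    intro h
    apply ha1
    have h1 : a * (starRingEnd ℂ) a = 1 := by
      nth_rewrite 1 [h]
      rw [hbdef]; exact inv_mul_cancel₀ hca
    have h2 : (Complex.normSq a : ℂ) = 1 := by rw [← Complex.mul_conj a]; exact h1
    have h3 : Complex.normSq a = 1 := by exact_mod_cast h2
    have := Complex.normSq_eq_norm_sq a
    nlinarith [norm_nonneg a]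
  have hrootb : q.eval b = 0 := root_inv hd hr ha0 hroot
  obtain ⟨s, hs⟩ := (Polynomial.dvd_iff_isRoot.2 hroot : (X - Polynomial.C a) ∣ q)
  have hsb : s.eval b = 0 := by
    have := hrootb
    rw [hs] at this
    simp only [eval_mul, eval_sub, eval_C, eval_X] at this
    rcases mul_eq_zero.1 this with h | h
    · exact absurd (sub_eq_zero.1 h).symm hab
    · exact h
  obtain ⟨r, hrr⟩ := (Polynomial.dvd_iff_isRoot.2 hsb : (X - Polynomial.C b) ∣ s)
  have hq : q = (X - Polynomial.C a) * (X - Polynomial.C b) * r := by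
    rw [hs, hrr]; ring
  have hrne : r ≠ 0 := by
    intro h; apply hq0; rw [hq, h, mul_zero]
  have hdeg : q.natDegree = 2 + r.natDegree := by
    rw [hq, natDegree_mul (by exact mul_ne_zero (X_sub_C_ne_zero a) (X_sub_C_ne_zero b)) hrne,
      natDegree_mul (X_sub_C_ne_zero a) (X_sub_C_ne_zero b), natDegree_X_sub_C, natDegree_X_sub_C]
  have hn1 : 1 ≤ n := by omega
  have hrep' : HasRep (fun t => f t / paF a t) (n - 1) (Polynomial.C (-b) * r) := by
    intro t
    have hpa : paF a t ≠ 0 := ne_of_gt (paF_pos a ha1 t)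
    have hpaC : ((paF a t : ℝ) : ℂ) ≠ 0 := by exact_mod_cast hpa
    have hE := E_ne_zero t
    have h2 := E_mul_E_neg t
    have hinv : (starRingEnd ℂ) a * b = 1 := mul_inv_cancel₀ hca
    -- identity : (E t - a) * (E t - b) = ↑(paF a t) * (-b) * E t
    have hid : (E t - a) * (E t - b) = ((paF a t : ℝ) : ℂ) * (-b) * E t := by
      rw [paF_coe]
      linear_combination (E t - a) * b * h2 - (E t - a) * (E t) * hinv
    have hmain := hr t
    rw [hq] at hmain
    simp only [eval_mul, eval_sub, eval_C, eval_X] at hmain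
    rw [hid] at hmain
    have hpow : E t ^ n = E t ^ (n - 1) * E t := by
      rw [← pow_succ]; congr 1; omega
    rw [hpow] at hmain
    have hmain2 : (E t ^ (n - 1) * (f t : ℂ)) * E t
        = (((paF a t : ℝ) : ℂ) * (-b) * r.eval (E t)) * E t := by
      linear_combination hmain
    have hcan := mul_right_cancel₀ hE hmain2
    have hdivcast : ((f t / paF a t : ℝ) : ℂ) = (f t : ℂ) / ((paF a t : ℝ) : ℂ) := by
      push_cast; ring
    rw [hdivcast]
    simp only [eval_mul, eval_C]
    rw [← mul_div_assoc, div_eq_iff hpaC]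
    linear_combination hcan
  refine ⟨hn1, fun t => f t / paF a t, Polynomial.C (-b) * r, ?_, hrep', ?_,
    mem_of_hasRep hrep'⟩
  · apply le_trans (natDegree_mul_le)
    simp only [natDegree_C]
    omega
  · intro t
    have hpa : paF a t ≠ 0 := ne_of_gt (paF_pos a ha1 t)
    field_simp

lemma coe_mul_apply (f g : TrigPolyRing) (t : ℝ) :
    (↑(f * g) : ℝ → ℝ) t = (↑f : ℝ → ℝ) t * (↑g : ℝ → ℝ) t := rfl

lemma zero_of_rep_zero {f : TrigPolyRing} {n : ℕ} (hr : HasRep (↑f) n 0) : f = 0 := by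
  apply Subtype.ext
  funext t
  have := hr t
  simp only [eval_zero] at this
  have hE : E t ^ n ≠ 0 := pow_ne_zero _ (E_ne_zero t)
  have : ((f : ℝ → ℝ) t : ℂ) = 0 := by
    rcases mul_eq_zero.1 this with h | h
    · exact absurd h hE
    · exact h
  exact_mod_cast this

instance : Nontrivial TrigPolyRing := by
  refine ⟨0, 1, fun h => ?_⟩
  have := congrFun (congrArg Subtype.val h) 0
  simp at this

instance : NoZeroDivisors TrigPolyRing := by
  refine ⟨fun {f g} hfg => ?_⟩
  obtain ⟨n₁, q₁, hd₁, hr₁⟩ := exists_rep f.2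
  obtain ⟨n₂, q₂, hd₂, hr₂⟩ := exists_rep g.2
  have hmul : HasRep ((↑f : ℝ → ℝ) * ↑g) (n₁ + n₂) (q₁ * q₂) := hasRep_mul hr₁ hr₂
  have hzero : q₁ * q₂ = 0 := by
    apply eq_zero_of_eval_E
    intro t
    rw [← hmul t]
    have : (↑f : ℝ → ℝ) t * (↑g : ℝ → ℝ) t = 0 := by
      rw [← coe_mul_apply, hfg]; rfl
    rw [Pi.mul_apply, this]
    push_cast
    ring
  rcases mul_eq_zero.1 hzero with h | h
  · left; exact zero_of_rep_zero (h ▸ hr₁)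
  · right; exact zero_of_rep_zero (h ▸ hr₂)

instance : IsDomain TrigPolyRing := NoZeroDivisors.to_isDomain _

lemma one_hasRep (m : ℕ) : HasRep ((1 : TrigPolyRing) : ℝ → ℝ) m (X ^ m) := by
  intro t
  have : ((1 : TrigPolyRing) : ℝ → ℝ) t = 1 := rfl
  rw [this]
  simp

lemma pa_prime {a : ℂ} (ha0 : a ≠ 0) (ha1 : ‖a‖ ≠ 1) : Prime (paE a) := by
  have hpane : paE a ≠ 0 := by
    intro h
    have := congrFun (congrArg Subtype.val h) 0
    have hpos := paF_pos a ha1 0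
    rw [show (paE a).val 0 = paF a 0 from rfl] at this
    simp at this
    linarith
  refine ⟨hpane, ?_, ?_⟩
  · -- not a unit
    intro hu
    obtain ⟨u, hu'⟩ := hu
    have hinv : paE a * ↑u⁻¹ = 1 := by rw [← hu']; exact u.mul_inv
    obtain ⟨m, qv, hdv, hrv⟩ := exists_rep (↑u⁻¹ : TrigPolyRing).2
    have hprod : HasRep (paF a * (↑(↑u⁻¹ : TrigPolyRing) : ℝ → ℝ)) (1 + m) (qa a * qv) :=
      hasRep_mul (paF_hasRep ha0) hrv
    have heqfun : paF a * (↑(↑u⁻¹ : TrigPolyRing) : ℝ → ℝ) = ((1 : TrigPolyRing) : ℝ → ℝ) := by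
      funext t
      rw [Pi.mul_apply, show paF a t = (↑(paE a) : ℝ → ℝ) t from rfl, ← coe_mul_apply, hinv]
    rw [heqfun] at hprod
    have := hasRep_unique hprod (one_hasRep (1 + m))
    have heval := congrArg (Polynomial.eval a) this
    rw [eval_mul, qa_eval_a, zero_mul, eval_pow, eval_X] at heval
    exact pow_ne_zero _ ha0 heval.symm
  · -- prime divisibility
    intro f g ⟨h, hfg⟩
    by_cases hf0 : f = 0
    · left; rw [hf0]; exact dvd_zero _
    by_cases hg0 : g = 0
    · right; rw [hg0]; exact dvd_zero _
    obtain ⟨nf, qf, hdf, hrf⟩ := exists_rep f.2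
    obtain ⟨ng, qg, hdg, hrg⟩ := exists_rep g.2
    obtain ⟨nh, qh, hdh, hrh⟩ := exists_rep h.2
    have h1 : HasRep ((↑f : ℝ → ℝ) * ↑g) (nf + ng) (qf * qg) := hasRep_mul hrf hrg
    have h2 : HasRep ((↑f : ℝ → ℝ) * ↑g) (1 + nh) (qa a * qh) := by
      have := hasRep_mul (paF_hasRep ha0) hrh
      have heqfun : paF a * (↑h : ℝ → ℝ) = (↑f : ℝ → ℝ) * ↑g := by
        funext t
        rw [Pi.mul_apply, show paF a t = (↑(paE a) : ℝ → ℝ) t from rfl, ← coe_mul_apply,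
          ← hfg, coe_mul_apply, Pi.mul_apply]
      rwa [heqfun] at this
    have hcross := hasRep_cross h2 h1
    -- X ^ (nf + ng) * (qa a * qh) = X ^ (1 + nh) * (qf * qg)
    have heval := congrArg (Polynomial.eval a) hcross
    simp only [eval_mul, eval_pow, eval_X, qa_eval_a] at heval
    have hfg0 : qf.eval a * qg.eval a = 0 := by
      have hane : a ^ (1 + nh) ≠ 0 := pow_ne_zero _ ha0
      rcases mul_eq_zero.1 (by linear_combination -heval :
          a ^ (1 + nh) * (qf.eval a * qg.eval a) = 0) with h' | h'
      · exact absurd h' hane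
      · exact h'
    have main : ∀ (p : TrigPolyRing) (np : ℕ) (qp : Polynomial ℂ),
        qp.natDegree ≤ 2 * np → HasRep (↑p) np qp → p ≠ 0 → qp.eval a = 0 →
        paE a ∣ p := by
      intro p np qp hdp hrp hp0 hevp
      have hqp0 : qp ≠ 0 := fun h' => hp0 (zero_of_rep_zero (h' ▸ hrp))
      obtain ⟨-, f', q', hd', hrep', hfac, hmem⟩ := key hdp hrp hqp0 ha0 ha1 hevp
      refine ⟨⟨f', hmem⟩, ?_⟩
      apply Subtype.ext
      funext t
      rw [coe_mul_apply]
      exact hfac t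
    rcases mul_eq_zero.1 hfg0 with h' | h'
    · left; exact main f nf qf hdf hrf hf0 h'
    · right; exact main g ng qg hdg hrg hg0 h'

lemma unit_of_constant (f : TrigPolyRing) (hc : ∀ t, (↑f : ℝ → ℝ) t = (↑f : ℝ → ℝ) 0)
    (h0 : (↑f : ℝ → ℝ) 0 ≠ 0) : IsUnit f := by
  refine IsUnit.of_mul_eq_one (algebraMap ℝ TrigPolyRing ((↑f : ℝ → ℝ) 0)⁻¹) ?_
  apply Subtype.ext
  funext t
  rw [coe_mul_apply]
  have : (↑(algebraMap ℝ TrigPolyRing ((↑f : ℝ → ℝ) 0)⁻¹) : ℝ → ℝ) t = ((↑f : ℝ → ℝ) 0)⁻¹ := rfl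
  rw [this, hc t]
  have : ((1 : TrigPolyRing) : ℝ → ℝ) t = 1 := rfl
  rw [this]
  field_simp

lemma exists_factorization : ∀ (n : ℕ) (f : TrigPolyRing), (∀ t, (↑f : ℝ → ℝ) t ≠ 0) →
    (∃ q, q.natDegree ≤ 2 * n ∧ HasRep (↑f) n q) →
    IsUnit f ∨ ∃ l : Multiset TrigPolyRing, (∀ z ∈ l, Prime z) ∧ l.prod = f := by
  intro n
  induction n with
  | zero =>
    intro f hnv ⟨q, hd, hr⟩
    left
    have hq : q = Polynomial.C (q.coeff 0) := Polynomial.eq_C_of_natDegree_eq_zero (by omega)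
    have hconst : ∀ t, ((↑f : ℝ → ℝ) t : ℂ) = q.coeff 0 := by
      intro t
      have := hr t
      rw [pow_zero, one_mul] at this
      rw [this, hq]
      simp
    apply unit_of_constant f _ (hnv 0)
    intro t
    have := (hconst t).trans (hconst 0).symm
    exact_mod_cast this
  | succ m ih =>
    intro f hnv ⟨q, hd, hr⟩
    have hq0 : q ≠ 0 := fun h' => (hnv 0) (by
      have := congrFun (congrArg Subtype.val (zero_of_rep_zero (h' ▸ hr))) 0
      simpa using this)
    by_cases hroot : ∃ a : ℂ, a ≠ 0 ∧ q.eval a = 0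
    · obtain ⟨a, ha0, hev⟩ := hroot
      have ha1 : ‖a‖ ≠ 1 := by
        intro habs
        have := Complex.norm_mul_exp_arg_mul_I a
        rw [habs] at this
        simp only [Complex.ofReal_one, one_mul] at this
        have hEa : E a.arg = a := this
        have := hr a.arg
        rw [hEa, hev] at this
        rcases mul_eq_zero.1 this with h' | h'
        · exact pow_ne_zero _ (E_ne_zero a.arg) (by rw [hEa]; exact h')
        · exact hnv a.arg (by exact_mod_cast h')
      obtain ⟨-, f', q', hd', hrep', hfac, hmem⟩ := key hd hr hq0 ha0 ha1 hev
      set F' : TrigPolyRing := ⟨f', hmem⟩ with hF'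
      have hff : f = paE a * F' := by
        apply Subtype.ext
        funext t
        rw [coe_mul_apply]
        exact hfac t
      have hnv' : ∀ t, (↑F' : ℝ → ℝ) t ≠ 0 := by
        intro t h'
        apply hnv t
        rw [hfac t]
        have hz : f' t = 0 := h'
        rw [hz, mul_zero]
      have hrep'' : ∃ q', q'.natDegree ≤ 2 * m ∧ HasRep (↑F') m q' := by
        refine ⟨q', by simpa using hd', ?_⟩
        have : (m + 1) - 1 = m := by omega
        rw [← this]
        exact hrep'
      rcases ih F' hnv' hrep'' with hu | ⟨l, hl, hprod⟩
      · right
        refine ⟨{paE a * F'}, ?_, by simpa using hff.symm⟩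
        intro z hz
        rw [Multiset.mem_singleton] at hz
        subst hz
        obtain ⟨u, hu'⟩ := hu
        have : Associated (paE a) (paE a * F') := ⟨u, by rw [hu']⟩
        exact this.prime (pa_prime ha0 ha1)
      · right
        refine ⟨paE a ::ₘ l, ?_, by rw [Multiset.prod_cons, hprod, hff]⟩
        intro z hz
        rcases Multiset.mem_cons.1 hz with h' | h'
        · subst h'; exact pa_prime ha0 ha1
        · exact hl z h'
    · -- no nonzero root : f is constant
      push_neg at hroot
      left
      have hcard : q.roots.card = q.natDegree :=
        (Polynomial.splits_iff_card_roots.1 (IsAlgClosed.splits q))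
      have hallzero : q.roots = Multiset.replicate q.natDegree 0 := by
        apply Multiset.eq_replicate.2
        refine ⟨hcard, fun b hb => ?_⟩
        by_contra hbne
        exact hroot b hbne ((Polynomial.mem_roots hq0).1 hb)
      have hform : q = Polynomial.C q.leadingCoeff * X ^ q.natDegree := by
        conv_lhs => rw [← Polynomial.C_leadingCoeff_mul_prod_multiset_X_sub_C hcard]
        congr 1
        rw [hallzero]
        simp [Multiset.map_replicate, Multiset.prod_replicate]
      have hlc : q.leadingCoeff ≠ 0 := leadingCoeff_ne_zero.2 hq0
      set v := q.natDegree with hv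
      have hvn : v = m + 1 := by
        have hsym := coeff_symm hd hr v (by omega)
        have h1 : q.coeff v = q.leadingCoeff := Polynomial.coeff_natDegree
        by_contra hne
        have h2 : q.coeff (2 * (m + 1) - v) = 0 := by
          rw [hform]
          rw [Polynomial.coeff_C_mul, Polynomial.coeff_X_pow]
          have : ¬(2 * (m + 1) - v = v) := by omega
          simp [this]
        rw [h1, h2, map_zero] at hsym
        exact hlc hsym
      have hconst : ∀ t, ((↑f : ℝ → ℝ) t : ℂ) = q.leadingCoeff := by
        intro t
        have h1 := hr t
        rw [hform] at h1
        simp only [eval_mul, eval_pow, eval_C, eval_X] at h1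
        rw [hvn] at h1
        exact mul_left_cancel₀ (pow_ne_zero (m+1) (E_ne_zero t))
          (by linear_combination h1 :
            E t ^ (m+1) * ((↑f : ℝ → ℝ) t : ℂ) = E t ^ (m+1) * q.leadingCoeff)
      apply unit_of_constant f _ (hnv 0)
      intro t
      have := (hconst t).trans (hconst 0).symm
      exact_mod_cast this


lemma prime_of_irreducible_factor (l : Multiset TrigPolyRing) (hl : ∀ p ∈ l, Prime p)
    (z : TrigPolyRing) (hz : Irreducible z) :
    ∀ c : TrigPolyRing, l.prod = z * c → Prime z := by
  induction l using Multiset.induction_on with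
  | empty =>
    intro c h
    rw [Multiset.prod_zero] at h
    exact absurd (IsUnit.of_mul_eq_one c h.symm) hz.not_isUnit
  | cons p s ih =>
    intro c h
    have hp := hl p (Multiset.mem_cons_self p s)
    have hs : ∀ x ∈ s, Prime x := fun x hx => hl x (Multiset.mem_cons_of_mem hx)
    rw [Multiset.prod_cons] at h
    have hpd : p ∣ z * c := ⟨s.prod, h.symm⟩
    rcases hp.2.2 z c hpd with hz' | hc
    · obtain ⟨d, hd⟩ := hz'
      rcases hz.isUnit_or_isUnit hd with h1 | h2
      · exact absurd h1 hp.not_unit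
      · have : Associated p z := ⟨h2.unit, by rw [IsUnit.unit_spec]; exact hd.symm⟩
        exact this.prime hp
    · obtain ⟨c', rfl⟩ := hc
      apply ih hs c'
      exact mul_left_cancel₀ hp.ne_zero (by rw [h]; ring)




/-- A non-zero non-unit trigonometric polynomial `P` that is nonvanishing on `ℝ`
has a factorization into irreducibles, unique up to order and multiplication by units. -/
theorem nonvanishing_trig_poly_unique_factorization
    (P : TrigPolyRing) (hP0 : P ≠ 0) (hPu : ¬ IsUnit P)
    (hP : ∀ t : ℝ, (P : ℝ → ℝ) t ≠ 0) :
    (∃ l : Multiset TrigPolyRing, (∀ z ∈ l, Irreducible z) ∧ l.prod = P) ∧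
    (∀ l₁ l₂ : Multiset TrigPolyRing,
      (∀ z ∈ l₁, Irreducible z) → (∀ z ∈ l₂, Irreducible z) →
      l₁.prod = P → l₂.prod = P → Multiset.Rel Associated l₁ l₂) := by
  obtain ⟨n, q, hd, hr⟩ := exists_rep P.2
  rcases exists_factorization n P hP ⟨q, hd, hr⟩ with hu | ⟨l, hl, hprod⟩
  · exact absurd hu hPu
  constructor
  · exact ⟨l, fun z hz => (hl z hz).irreducible, hprod⟩
  · intro l₁ l₂ h₁ h₂ e₁ e₂
    have hprime : ∀ (l' : Multiset TrigPolyRing), (∀ z ∈ l', Irreducible z) → l'.prod = P →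
        ∀ z ∈ l', Prime z := by
      classical
      intro l' hirr he z hz
      apply prime_of_irreducible_factor l hl z (hirr z hz) (l'.erase z).prod
      rw [hprod, ← he, ← Multiset.prod_cons, Multiset.cons_erase hz]
    refine prime_factors_unique (hprime l₁ h₁ e₁) (hprime l₂ h₂ e₂) ?_
    rw [e₁, e₂]
    exact Associated.refl P
end
end
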